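/- arXiv:math/0508096 — 5 statements merged into one kernel-verified Lean document; each statement's English description precedes it below -/
import Mathlib

section
/- Let F be an N×N complex matrix whose j-th column is the vector f_j in ℂ^N, and let |f_j| denote the Euclidean norm of f_j. Then |perm(F)| ≤ (N!/N^{N/2}) ∏_{j=1}^N |f_j|, where perm denotes the permanent. -/
open scoped BigOperators

/-- The permanent of an `N × N` complex matrix: `∑_{σ ∈ S_N} ∏_j F_{σ(j), j}`. -/
noncomputable def perm {N : ℕ} (F : Matrix (Fin N) (Fin N) ℂ) : ℂ :=
  ∑ σ : Equiv.Perm (Fin N), ∏ j, F (σ j) j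

/-- Euclidean norm of a vector in `ℂ^N`. -/
noncomputable def enorm {N : ℕ} (f : Fin N → ℂ) : ℝ :=
  Real.sqrt (∑ i, ‖f i‖ ^ 2)

namespace PermHadamard

open Finset

/-- Real permanent of a square array. -/
noncomputable def permR {N : ℕ} (X : Fin N → Fin N → ℝ) : ℝ :=
  ∑ σ : Equiv.Perm (Fin N), ∏ j, X (σ j) j

/-- The minor obtained by deleting row `i` and column `j`. -/
def minor {n : ℕ} (X : Fin (n+1) → Fin (n+1) → ℝ) (i j : Fin (n+1)) : Fin n → Fin n → ℝ :=
  fun a b => X (i.succAbove a) (j.succAbove b)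

lemma permR_nonneg {N : ℕ} {X : Fin N → Fin N → ℝ} (hX : ∀ i j, 0 ≤ X i j) :
    0 ≤ permR X :=
  Finset.sum_nonneg fun _ _ => Finset.prod_nonneg fun _ _ => hX _ _

def permPhi {n : ℕ} (j : Fin (n+1)) (p : Fin (n+1) × Equiv.Perm (Fin n)) :
    Equiv.Perm (Fin (n+1)) :=
  (finSuccEquiv' j).trans ((Equiv.optionCongr p.2).trans (finSuccEquiv' p.1).symm)

lemma permPhi_apply_self {n : ℕ} (j : Fin (n+1)) (p) : permPhi j p j = p.1 := by
  simp [permPhi, finSuccEquiv'_at]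

lemma permPhi_apply_succAbove {n : ℕ} (j : Fin (n+1)) (p) (k : Fin n) :
    permPhi j p (j.succAbove k) = p.1.succAbove (p.2 k) := by
  simp [permPhi, finSuccEquiv'_succAbove, finSuccEquiv'_symm_some]

lemma permPhi_bijective {n : ℕ} (j : Fin (n+1)) : Function.Bijective (permPhi j) := by
  rw [Fintype.bijective_iff_injective_and_card]
  constructor
  · intro p q h
    have h1 : p.1 = q.1 := by
      have := congrArg (fun σ => σ j) h
      simpa [permPhi_apply_self] using this
    have h2 : p.2 = q.2 := by
      apply Equiv.ext; intro k
      have := congrArg (fun σ => σ (j.succAbove k)) h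
      simp only [permPhi_apply_succAbove] at this
      rw [h1] at this
      exact Fin.succAbove_right_injective this
    exact Prod.ext h1 h2
  · simp [Fintype.card_perm, Nat.factorial_succ]

/-- Laplace expansion of the permanent along column `j`. -/
lemma permR_laplace {n : ℕ} (X : Fin (n+1) → Fin (n+1) → ℝ) (j : Fin (n+1)) :
    permR X = ∑ i, X i j * permR (minor X i j) := by
  unfold permR
  rw [← Fintype.sum_bijective (permPhi j) (permPhi_bijective j) _ _ (fun p => rfl)]
  rw [← Finset.univ_product_univ, Finset.sum_product]
  refine Finset.sum_congr rfl fun i _ => ?_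
  rw [Finset.mul_sum]
  refine Finset.sum_congr rfl fun τ _ => ?_
  rw [Fin.prod_univ_succAbove (fun k => X (permPhi j (i, τ) k) k) j]
  simp [permPhi_apply_self, permPhi_apply_succAbove, minor]

/-- AM-GM: a product of nonnegative reals is at most the `n`-th power of their average. -/
lemma amgm_prod_le (n : ℕ) (x : Fin n → ℝ) (hx : ∀ k, 0 ≤ x k) :
    ∏ k, x k ≤ ((∑ k, x k) / n) ^ n := by
  rcases Nat.eq_zero_or_pos n with h | h
  · subst h; simp
  have hn : (0:ℝ) < n := by exact_mod_cast h
  have hw : ∑ _k : Fin n, (1:ℝ)/n = 1 := by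
    simp [Finset.sum_const]
    field_simp
  have key := Real.geom_mean_le_arith_mean_weighted Finset.univ
      (fun _ => (1:ℝ)/n) x (fun i _ => by positivity) hw (fun i _ => hx i)
  have hprod : ∏ k, x k ^ ((1:ℝ)/n) = (∏ k, x k) ^ ((1:ℝ)/n) :=
    Real.finset_prod_rpow _ _ (fun i _ => hx i) _
  have hsum : ∑ k, (1:ℝ)/n * x k = (∑ k, x k) / n := by
    rw [← Finset.mul_sum]; ring
  rw [hprod, hsum] at key
  have h0 : (0:ℝ) ≤ (∏ k, x k) ^ ((1:ℝ)/n) :=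
    Real.rpow_nonneg (Finset.prod_nonneg fun i _ => hx i) _
  have := pow_le_pow_left₀ h0 key n
  rwa [← Real.rpow_natCast ((∏ k, x k) ^ ((1:ℝ)/n)) n, ← Real.rpow_mul
    (Finset.prod_nonneg fun i _ => hx i), one_div_mul_cancel (ne_of_gt hn),
    Real.rpow_one] at this

/-- Key elementary estimate: `(1 + (u-1)/n²)^n ≤ u` for `1 ≤ u ≤ n+1`. -/
lemma key_binomial (n : ℕ) (hn : 1 ≤ n) (u : ℝ) (hu1 : 1 ≤ u) (hu2 : u ≤ n + 1) :
    (1 + (u - 1) / (n:ℝ)^2) ^ n ≤ u := by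
  have hn0 : (0:ℝ) < n := by exact_mod_cast hn
  set a : ℝ := (u - 1) / (n:ℝ)^2 with ha
  have ha0 : 0 ≤ a := div_nonneg (by linarith) (by positivity)
  have han : a * n = (u-1)/n := by
    rw [ha]; field_simp
  have hbin : (1 + a) ^ n = ∑ k ∈ Finset.range (n+1), a ^ k * n.choose k := by
    rw [add_comm, add_pow]; simp
  rw [hbin, Finset.sum_range_succ']
  have hterm : ∀ k ∈ Finset.range n, a ^ (k+1) * (n.choose (k+1) : ℝ) ≤ (u-1)/n := by
    intro k _
    have hc : (n.choose (k+1) : ℝ) ≤ (n:ℝ) ^ (k+1) := by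
      exact_mod_cast Nat.choose_le_pow n (k+1)
    calc a ^ (k+1) * (n.choose (k+1) : ℝ) ≤ a ^ (k+1) * (n:ℝ)^(k+1) :=
          mul_le_mul_of_nonneg_left hc (by positivity)
      _ = ((u-1)/n) ^ (k+1) := by rw [← mul_pow, han]
      _ ≤ ((u-1)/n) ^ 1 := by
          apply pow_le_pow_of_le_one (div_nonneg (by linarith) hn0.le) _ (by omega)
          rw [div_le_one hn0]; linarith
      _ = (u-1)/n := pow_one _
  calc (∑ k ∈ Finset.range n, a ^ (k+1) * (n.choose (k+1):ℝ)) + a^0 * (n.choose 0 : ℝ)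
      ≤ (∑ _k ∈ Finset.range n, (u-1)/n) + 1 :=
        add_le_add (Finset.sum_le_sum hterm) (by simp)
    _ = u := by
        rw [Finset.sum_const, Finset.card_range, nsmul_eq_mul]
        field_simp
        ring

/-- The crucial "row lemma". -/
lemma rowLemma (n : ℕ) (b : Fin (n+1) → ℝ) (t : ℝ)
    (hb0 : ∀ j, 0 ≤ b j) (hb1 : ∀ j, b j ≤ 1)
    (hsum : 1 ≤ ∑ j, b j)
    (h : ∀ j, t * b j ≤ ∏ k : Fin n, (1 - b (j.succAbove k))) :
    t ≤ (n+1) * ((n : ℝ)/(n+1)) ^ n := by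
  have hex : ∃ j, 1/(n+1 : ℝ) ≤ b j := by
    by_contra hc
    push_neg at hc
    have hlt : ∑ j, b j < ∑ _j : Fin (n+1), 1/(n+1:ℝ) :=
      Finset.sum_lt_sum_of_nonempty ⟨0, Finset.mem_univ 0⟩ (fun j _ => hc j)
    rw [Finset.sum_const, Finset.card_univ, Fintype.card_fin, nsmul_eq_mul] at hlt
    have h2 : ((n:ℝ)+1) * (1/((n:ℝ)+1)) = 1 := by field_simp
    push_cast at hlt
    rw [h2] at hlt
    linarith
  obtain ⟨j, hj⟩ := hex
  have hβpos : 0 < b j := lt_of_lt_of_le (by positivity) hj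
  rcases Nat.eq_zero_or_pos n with hn | hn
  · subst hn
    have hle := h j
    simp only [Finset.univ_eq_empty, Finset.prod_empty] at hle
    have hbj : b j = 1 := by
      have h1 : (1:ℝ)/((0:ℕ)+1) = 1 := by norm_num
      rw [h1] at hj
      linarith [hb1 j]
    rw [hbj, mul_one] at hle
    simpa using hle
  have hn0 : (0:ℝ) < n := by exact_mod_cast hn
  set β := b j with hβ
  have hnonneg : 0 ≤ ∑ k : Fin n, (1 - b (j.succAbove k)) :=
    Finset.sum_nonneg fun k _ => by linarith [hb1 (j.succAbove k)]
  have h1 : ∏ k : Fin n, (1 - b (j.succAbove k)) ≤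
      ((∑ k : Fin n, (1 - b (j.succAbove k))) / n) ^ n :=
    amgm_prod_le n _ (fun k => by linarith [hb1 (j.succAbove k)])
  have h2 : ∑ k : Fin n, (1 - b (j.succAbove k)) = n - ((∑ i, b i) - β) := by
    rw [Finset.sum_sub_distrib, Fin.sum_univ_succAbove b j]
    simp [hβ]
  have h3 : ((∑ k : Fin n, (1 - b (j.succAbove k))) / n) ^ n ≤ ((n - 1 + β)/n) ^ n := by
    apply pow_le_pow_left₀ (div_nonneg hnonneg hn0.le)
    apply (div_le_div_iff_of_pos_right hn0).mpr
    rw [h2]; linarith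
  set u : ℝ := (n+1) * β with hu
  have hu1 : 1 ≤ u := by
    rw [hu]
    calc (1:ℝ) = ((n:ℝ)+1) * (1/((n:ℝ)+1)) := by field_simp
      _ ≤ ((n:ℝ)+1) * β := by
          apply mul_le_mul_of_nonneg_left _ (by positivity)
          exact_mod_cast hj
  have hu2 : u ≤ n + 1 := by
    rw [hu]
    nlinarith [hb1 j]
  have hbase : (n - 1 + β)/n = (1 + (u - 1) / (n:ℝ)^2) * ((n:ℝ)/(n+1)) := by
    rw [hu]; field_simp; ring
  have h4 : ((n - 1 + β)/n) ^ n ≤ u * ((n:ℝ)/(n+1)) ^ n := by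
    rw [hbase, mul_pow]
    exact mul_le_mul_of_nonneg_right (key_binomial n hn u hu1 hu2) (by positivity)
  have h5 : t * β ≤ ((n+1) * ((n : ℝ)/(n+1)) ^ n) * β := by
    calc t * β ≤ ∏ k : Fin n, (1 - b (j.succAbove k)) := h j
      _ ≤ ((∑ k : Fin n, (1 - b (j.succAbove k))) / n) ^ n := h1
      _ ≤ ((n - 1 + β)/n) ^ n := h3
      _ ≤ u * ((n:ℝ)/(n+1)) ^ n := h4
      _ = ((n+1) * ((n : ℝ)/(n+1)) ^ n) * β := by rw [hu]; ring
  exact le_of_mul_le_mul_right h5 hβpos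

/-- The Hadamard-type constant. -/
noncomputable def T (N : ℕ) : ℝ := (N.factorial : ℝ) / (N : ℝ) ^ ((N : ℝ) / 2)

lemma T_pos (N : ℕ) : 0 < T N := by
  unfold T
  apply div_pos (by exact_mod_cast N.factorial_pos)
  rcases Nat.eq_zero_or_pos N with h | h
  · subst h; norm_num
  · exact Real.rpow_pos_of_pos (by exact_mod_cast h) _

lemma rpow_half_sq (m : ℕ) : ((m:ℝ) ^ ((m:ℝ)/2)) ^ 2 = (m:ℝ) ^ (m:ℕ) := by
  rcases Nat.eq_zero_or_pos m with h | h
  · subst h; norm_num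
  · have hm : (0:ℝ) < m := by exact_mod_cast h
    rw [← Real.rpow_natCast ((m:ℝ) ^ ((m:ℝ)/2)) 2, ← Real.rpow_mul hm.le]
    norm_num [Real.rpow_natCast]

lemma T_sq' (m : ℕ) : (T m)^2 = (m.factorial:ℝ)^2 / (m:ℝ)^(m:ℕ) := by
  unfold T
  rw [div_pow, rpow_half_sq]

lemma T_sq (n : ℕ) : (T n)^2 * ((n+1) * ((n:ℝ)/(n+1))^n) = (T (n+1))^2 := by
  rw [T_sq', T_sq' (n+1)]
  push_cast [Nat.factorial_succ]
  rw [div_pow]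
  rcases Nat.eq_zero_or_pos n with h | h
  · subst h; norm_num
  · have hn : (0:ℝ) < n := by exact_mod_cast h
    have h1 : ((n:ℝ))^(n:ℕ) ≠ 0 := by positivity
    have h2 : ((n:ℝ)+1)^(n:ℕ) ≠ 0 := by positivity
    have h3 : ((n:ℝ)+1)^(n+1:ℕ) ≠ 0 := by positivity
    field_simp
    ring

def goodSet (N : ℕ) : Set (Fin N → Fin N → ℝ) :=
  {X | (∀ i j, 0 ≤ X i j) ∧ ∀ j, ∑ i, (X i j)^2 = 1}

lemma continuous_permR {N : ℕ} : Continuous fun X : Fin N → Fin N → ℝ => permR X := by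
  unfold permR
  apply continuous_finset_sum
  intro σ _
  apply continuous_finset_prod
  intro j _
  exact (continuous_apply j).comp (continuous_apply (σ j))

lemma exists_max (N : ℕ) :
    ∃ X₀ ∈ goodSet N, ∀ Y ∈ goodSet N, permR Y ≤ permR X₀ := by
  have hne : (goodSet N).Nonempty := by
    refine ⟨fun i j => if i = j then 1 else 0, fun i j => by dsimp; split <;> norm_num, fun j => ?_⟩
    have h : ∀ i, ((if i = j then (1:ℝ) else 0))^2 = if i = j then 1 else 0 := by
      intro i; split <;> norm_num
    rw [Finset.sum_congr rfl fun i _ => h i, Finset.sum_ite_eq' Finset.univ j fun _ => (1:ℝ)]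
    simp
  have hclosed : IsClosed (goodSet N) := by
    have h1 : IsClosed {X : Fin N → Fin N → ℝ | ∀ i j, 0 ≤ X i j} := by
      rw [Set.setOf_forall]
      refine isClosed_iInter fun i => ?_
      rw [Set.setOf_forall]
      exact isClosed_iInter fun j =>
        isClosed_le continuous_const ((continuous_apply j).comp (continuous_apply i))
    have h2 : IsClosed {X : Fin N → Fin N → ℝ | ∀ j, ∑ i, (X i j)^2 = 1} := by
      rw [Set.setOf_forall]
      refine isClosed_iInter fun j => isClosed_eq ?_ continuous_const
      exact continuous_finset_sum _ fun i _ =>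
        ((continuous_apply j).comp (continuous_apply i)).pow 2
    exact h1.inter h2
  have hcpt : IsCompact (goodSet N) := by
    have hK : IsCompact (Set.univ.pi fun _ : Fin N =>
        Set.univ.pi fun _ : Fin N => Set.Icc (0:ℝ) 1) :=
      isCompact_univ_pi fun _ => isCompact_univ_pi fun _ => isCompact_Icc
    refine hK.of_isClosed_subset hclosed ?_
    intro X ⟨hnn, hunit⟩
    rw [Set.mem_pi]
    intro i _
    rw [Set.mem_pi]
    intro j _
    refine ⟨hnn i j, ?_⟩
    have hsq : (X i j)^2 ≤ 1 := by
      rw [← hunit j]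
      exact Finset.single_le_sum (f := fun i => (X i j)^2)
        (fun i _ => sq_nonneg _) (Finset.mem_univ i)
    nlinarith [hnn i j]
  obtain ⟨X₀, hX₀, hmax⟩ := hcpt.exists_isMaxOn hne continuous_permR.continuousOn
  exact ⟨X₀, hX₀, fun Y hY => hmax hY⟩

/-- The maximizer analysis: any maximizer of the permanent over `goodSet (n+1)` has value
at most `T (n+1)`, given the inductive hypothesis in dimension `n`. -/
lemma max_le_T (n : ℕ) (X₀ : Fin (n+1) → Fin (n+1) → ℝ)
    (hX₀ : X₀ ∈ goodSet (n+1))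
    (hmax : ∀ Y ∈ goodSet (n+1), permR Y ≤ permR X₀)
    (IH : ∀ X : Fin n → Fin n → ℝ, (∀ i j, 0 ≤ X i j) →
      permR X ≤ T n * ∏ j, Real.sqrt (∑ i, (X i j)^2)) :
    permR X₀ ≤ T (n+1) := by
  obtain ⟨hnn, hunit⟩ := hX₀
  set M := permR X₀ with hM
  rcases le_or_gt M 0 with hM0 | hMpos
  · exact hM0.trans (T_pos _).le
  have ha1 : ∀ i j, (X₀ i j)^2 ≤ 1 := by
    intro i j
    rw [← hunit j]
    exact Finset.single_le_sum (f := fun i => (X₀ i j)^2)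
      (fun i _ => sq_nonneg _) (Finset.mem_univ i)
  -- Step 1: at the maximizer, each minor permanent equals `M * X₀ i j`.
  have key : ∀ j i, permR (minor X₀ i j) = M * X₀ i j := by
    intro j
    set g : Fin (n+1) → ℝ := fun i => permR (minor X₀ i j) with hg
    have hgnn : ∀ i, 0 ≤ g i := fun i => permR_nonneg (fun a b => hnn _ _)
    have hLap : M = ∑ i, X₀ i j * g i := permR_laplace X₀ j
    set c2 := ∑ i, (g i)^2 with hc2
    have hc2nn : 0 ≤ c2 := Finset.sum_nonneg fun i _ => sq_nonneg _
    have hc2M : c2 ≤ M^2 := by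
      rcases eq_or_lt_of_le hc2nn with h0 | hpos
      · rw [← h0]; positivity
      · set Y : Fin (n+1) → Fin (n+1) → ℝ :=
          fun a b => if b = j then g a / Real.sqrt c2 else X₀ a b with hYdef
        have hsq : Real.sqrt c2 ^ 2 = c2 := Real.sq_sqrt hc2nn
        have hspos : 0 < Real.sqrt c2 := Real.sqrt_pos.mpr hpos
        have hYgood : Y ∈ goodSet (n+1) := by
          constructor
          · intro a b
            simp only [hYdef]
            split
            · exact div_nonneg (hgnn a) (Real.sqrt_nonneg _)
            · exact hnn a b
          · intro b
            by_cases hb : b = j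
            · subst hb
              have : ∀ i, (Y i b)^2 = (g i)^2 / c2 := by
                intro i
                simp only [hYdef, if_pos]
                rw [div_pow, hsq]
              rw [Finset.sum_congr rfl fun i _ => this i, ← Finset.sum_div, ← hc2,
                div_self (ne_of_gt hpos)]
            · have : ∀ i, (Y i b)^2 = (X₀ i b)^2 := by
                intro i
                simp only [hYdef, if_neg hb]
              rw [Finset.sum_congr rfl fun i _ => this i, hunit b]
        have hminor : ∀ i, minor Y i j = minor X₀ i j := by
          intro i; funext a b
          simp only [minor, hYdef]
          rw [if_neg (Fin.succAbove_ne j b)]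
        have hpermY : permR Y = Real.sqrt c2 := by
          rw [permR_laplace Y j]
          have hYij : ∀ i, Y i j = g i / Real.sqrt c2 := by
            intro i; simp only [hYdef, if_pos]
          calc ∑ i, Y i j * permR (minor Y i j)
              = ∑ i, (g i)^2 / Real.sqrt c2 := by
                refine Finset.sum_congr rfl fun i _ => ?_
                rw [hYij i, hminor i]
                have hgi : permR (minor X₀ i j) = g i := rfl
                rw [hgi]
                ring
            _ = c2 / Real.sqrt c2 := by rw [← Finset.sum_div, ← hc2]
            _ = Real.sqrt c2 := Real.div_sqrt
        have hle : Real.sqrt c2 ≤ M := hpermY ▸ hmax Y hYgood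
        calc c2 = Real.sqrt c2 ^ 2 := hsq.symm
          _ ≤ M^2 := pow_le_pow_left₀ (Real.sqrt_nonneg _) hle 2
    have hexp : ∑ i, (g i - M * X₀ i j)^2 = c2 - M^2 := by
      have hterm : ∀ i, (g i - M * X₀ i j)^2
          = (g i)^2 - 2*M*(X₀ i j * g i) + M^2 * (X₀ i j)^2 := fun i => by ring
      rw [Finset.sum_congr rfl fun i _ => hterm i]
      rw [Finset.sum_add_distrib, Finset.sum_sub_distrib, ← Finset.mul_sum, ← Finset.mul_sum,
        ← hc2, ← hLap, hunit j]
      ring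
    intro i
    have heq : ∑ i, (g i - M * X₀ i j)^2 = 0 := by
      apply le_antisymm _ (Finset.sum_nonneg fun i _ => sq_nonneg _)
      rw [hexp]; linarith
    have := (Finset.sum_eq_zero_iff_of_nonneg (fun i _ => sq_nonneg _)).mp heq i
      (Finset.mem_univ i)
    have h0 := (pow_eq_zero_iff two_ne_zero).mp this
    have : g i = M * X₀ i j := by linarith [sub_eq_zero.mp h0]
    exact this
  -- Step 2: row inequalities
  set t := M^2 / (T n)^2 with ht
  have hTn := T_pos n
  have hrow : ∀ i j, t * (X₀ i j)^2 ≤ ∏ k : Fin n, (1 - (X₀ i (j.succAbove k))^2) := by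
    intro i j
    have hIH : permR (minor X₀ i j)
        ≤ T n * ∏ k, Real.sqrt (∑ i', (minor X₀ i j i' k)^2) :=
      IH _ (fun a b => hnn _ _)
    have hcolm : ∀ k, ∑ i' : Fin n, (minor X₀ i j i' k)^2
        = 1 - (X₀ i (j.succAbove k))^2 := by
      intro k
      have hs := Fin.sum_univ_succAbove (fun i' => (X₀ i' (j.succAbove k))^2) i
      rw [hunit (j.succAbove k)] at hs
      simp only [minor]
      linarith
    rw [key j i] at hIH
    have hL : 0 ≤ M * X₀ i j := mul_nonneg hMpos.le (hnn i j)
    have h2 := pow_le_pow_left₀ hL hIH 2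
    rw [mul_pow, mul_pow, ← Finset.prod_pow] at h2
    have h3 : ∀ k ∈ Finset.univ, (Real.sqrt (∑ i', (minor X₀ i j i' k)^2))^2
        = 1 - (X₀ i (j.succAbove k))^2 := by
      intro k _
      rw [Real.sq_sqrt (Finset.sum_nonneg fun _ _ => sq_nonneg _), hcolm k]
    rw [Finset.prod_congr rfl h3] at h2
    rw [ht, div_mul_eq_mul_div, div_le_iff₀ (by positivity)]
    calc M^2 * (X₀ i j)^2 ≤ (T n)^2 * ∏ k : Fin n, (1 - (X₀ i (j.succAbove k))^2) := h2
      _ = (∏ k : Fin n, (1 - (X₀ i (j.succAbove k))^2)) * (T n)^2 := mul_comm _ _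
  -- Step 3: some row has squared mass at least 1
  have hrowsum : ∃ i, 1 ≤ ∑ j, (X₀ i j)^2 := by
    by_contra hcon
    push_neg at hcon
    have h1 : ∑ i : Fin (n+1), ∑ j : Fin (n+1), (X₀ i j)^2
        < ∑ _i : Fin (n+1), (1:ℝ) :=
      Finset.sum_lt_sum_of_nonempty ⟨0, Finset.mem_univ 0⟩ fun i _ => hcon i
    rw [Finset.sum_comm] at h1
    simp only [hunit] at h1
    simp at h1
  obtain ⟨i, hi⟩ := hrowsum
  have hrl := rowLemma n (fun j => (X₀ i j)^2) t (fun j => sq_nonneg _)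
    (fun j => ha1 i j) hi (fun j => hrow i j)
  have hMsq : M^2 ≤ (T (n+1))^2 := by
    rw [← T_sq n]
    have hMt : M^2 = t * (T n)^2 := by rw [ht]; field_simp
    rw [hMt, mul_comm ((T n)^2) _]
    exact mul_le_mul_of_nonneg_right hrl (by positivity)
  nlinarith [T_pos (n+1)]

/-- Reduction from the normalized bound to the general bound. -/
lemma norm_reduce (N : ℕ) (B : ℝ) (hB : 0 ≤ B)
    (hbound : ∀ Y ∈ goodSet N, permR Y ≤ B)
    (X : Fin N → Fin N → ℝ) (hX : ∀ i j, 0 ≤ X i j) :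
    permR X ≤ B * ∏ j, Real.sqrt (∑ i, (X i j)^2) := by
  by_cases hz : ∃ j, ∑ i, (X i j)^2 = 0
  · obtain ⟨j, hj⟩ := hz
    have hcol : ∀ i, X i j = 0 := by
      intro i
      have := (Finset.sum_eq_zero_iff_of_nonneg
        (fun i _ => sq_nonneg (X i j))).mp hj i (Finset.mem_univ i)
      exact pow_eq_zero_iff two_ne_zero |>.mp this
    have h0 : permR X = 0 := by
      unfold permR
      apply Finset.sum_eq_zero
      intro σ _
      exact Finset.prod_eq_zero (Finset.mem_univ j) (hcol (σ j))
    rw [h0]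
    positivity
  · push_neg at hz
    have hpos : ∀ j, 0 < ∑ i, (X i j)^2 := fun j =>
      lt_of_le_of_ne (Finset.sum_nonneg fun i _ => sq_nonneg _) (Ne.symm (hz j))
    set c : Fin N → ℝ := fun j => Real.sqrt (∑ i, (X i j)^2) with hc
    have hcpos : ∀ j, 0 < c j := fun j => Real.sqrt_pos.mpr (hpos j)
    set Y : Fin N → Fin N → ℝ := fun i j => X i j / c j with hY
    have hYgood : Y ∈ goodSet N := by
      constructor
      · exact fun i j => div_nonneg (hX i j) (hcpos j).le
      · intro j
        have h1 : ∀ i, (Y i j)^2 = (X i j)^2 / (∑ i', (X i' j)^2) := by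
          intro i
          show (X i j / c j)^2 = _
          rw [div_pow, hc, Real.sq_sqrt (hpos j).le]
        rw [Finset.sum_congr rfl fun i _ => h1 i, ← Finset.sum_div,
          div_self (ne_of_gt (hpos j))]
    have hXY : permR X = (∏ j, c j) * permR Y := by
      unfold permR
      rw [Finset.mul_sum]
      refine Finset.sum_congr rfl fun σ _ => ?_
      rw [← Finset.prod_mul_distrib]
      refine Finset.prod_congr rfl fun k _ => ?_
      show _ = c k * (X (σ k) k / c k)
      rw [mul_div_cancel₀ _ (ne_of_gt (hcpos k))]
    rw [hXY]
    calc (∏ j, c j) * permR Y ≤ (∏ j, c j) * B :=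
          mul_le_mul_of_nonneg_left (hbound Y hYgood)
            (Finset.prod_nonneg fun j _ => (hcpos j).le)
      _ = B * ∏ j, c j := mul_comm _ _

/-- The main real inequality. -/
lemma mainR : ∀ (N : ℕ) (X : Fin N → Fin N → ℝ), (∀ i j, 0 ≤ X i j) →
    permR X ≤ T N * ∏ j, Real.sqrt (∑ i, (X i j)^2) := by
  intro N
  induction N with
  | zero =>
    intro X hX
    have h1 : permR X = 1 := by
      unfold permR
      simp
    have h2 : T 0 = 1 := by unfold T; norm_num
    simp [h1, h2]
  | succ n IH =>
    intro X hX
    obtain ⟨X₀, hX₀good, hmax⟩ := exists_max (n+1)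
    have hMle : permR X₀ ≤ T (n+1) := max_le_T n X₀ hX₀good hmax IH
    have := norm_reduce (n+1) (permR X₀)
      (permR_nonneg hX₀good.1) hmax X hX
    calc permR X ≤ permR X₀ * ∏ j, Real.sqrt (∑ i, (X i j)^2) := this
      _ ≤ T (n+1) * ∏ j, Real.sqrt (∑ i, (X i j)^2) := by
          apply mul_le_mul_of_nonneg_right hMle
          exact Finset.prod_nonneg fun j _ => Real.sqrt_nonneg _

end PermHadamard

theorem permanent_hadamard {N : ℕ} (F : Matrix (Fin N) (Fin N) ℂ) :
    ‖perm F‖ ≤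
      (N.factorial : ℝ) / (N : ℝ) ^ ((N : ℝ) / 2) *
        ∏ j, _root_.enorm (fun i => F i j) := by
  have h1 : ‖perm F‖ ≤ PermHadamard.permR (fun i j => ‖F i j‖) := by
    unfold perm PermHadamard.permR
    calc ‖∑ σ : Equiv.Perm (Fin N), ∏ j, F (σ j) j‖
        ≤ ∑ σ : Equiv.Perm (Fin N), ‖∏ j, F (σ j) j‖ :=
          norm_sum_le _ _
      _ = ∑ σ : Equiv.Perm (Fin N), ∏ j, ‖F (σ j) j‖ := by
          refine Finset.sum_congr rfl fun σ _ => ?_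
          exact norm_prod _ _
  have h2 := PermHadamard.mainR N (fun i j => ‖F i j‖)
    (fun i j => norm_nonneg _)
  have h3 : (∏ j, Real.sqrt (∑ i, (‖F i j‖)^2))
      = ∏ j, _root_.enorm (fun i => F i j) := by
    refine Finset.prod_congr rfl fun j _ => rfl
  rw [h3] at h2
  exact h1.trans h2
end

section
/- Let Z be an N×N complex matrix all of whose entries lie on the unit circle. The product ∏_{j=1}^N Z_{j,σ(j)} is independent of the permutation σ ∈ S_N if and only if there exist ξ, ζ ∈ ℂ^N with all entries on the unit circle such that Z_{j,k} = ξ_j ζ_k for all j, k. -/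
open scoped BigOperators

theorem unimodular_product_independent_iff {N : ℕ}
    (Z : Matrix (Fin N) (Fin N) ℂ)
    (hZ : ∀ j k, ‖Z j k‖ = 1) :
    (∀ σ τ : Equiv.Perm (Fin N), ∏ j, Z j (σ j) = ∏ j, Z j (τ j)) ↔
      ∃ ξ ζ : Fin N → ℂ, (∀ j, ‖ξ j‖ = 1) ∧
        (∀ k, ‖ζ k‖ = 1) ∧ ∀ j k, Z j k = ξ j * ζ k := by
  have hne : ∀ j k, Z j k ≠ 0 := by
    intro j k h
    have := hZ j k
    simp [h] at this
  constructor
  · intro h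
    rcases Nat.eq_zero_or_pos N with h0 | h0
    · subst h0
      exact ⟨fun j => j.elim0, fun j => j.elim0, fun j => j.elim0, fun j => j.elim0,
        fun j => j.elim0⟩
    haveI : NeZero N := ⟨h0.ne'⟩
    have key : ∀ j k : Fin N, Z j 0 * Z 0 k = Z j k * Z 0 0 := by
      intro j k
      rcases eq_or_ne j 0 with rfl | hj
      · ring
      rcases eq_or_ne k 0 with rfl | hk
      · ring
      set τ : Equiv.Perm (Fin N) := Equiv.swap j k with hτ
      set σ : Equiv.Perm (Fin N) := τ * Equiv.swap 0 j with hσ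
      have hσ0 : σ 0 = k := by
        simp [hσ, hτ, Equiv.swap_apply_of_ne_of_ne, hj.symm, Equiv.swap_apply_left]
      have hσj : σ j = 0 := by
        simp [hσ, hτ, Equiv.swap_apply_right, Equiv.swap_apply_of_ne_of_ne hj.symm hk.symm]
      have hτ0 : τ 0 = 0 := by
        simp [hτ, Equiv.swap_apply_of_ne_of_ne, hj.symm, hk.symm]
      have hτj : τ j = k := by simp [hτ]
      have hσi : ∀ i : Fin N, i ≠ 0 → i ≠ j → σ i = τ i := by
        intro i hi0 hij
        simp [hσ, Equiv.swap_apply_of_ne_of_ne hi0 hij]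
      have hp := h σ τ
      have hsplit : ∀ ρ : Equiv.Perm (Fin N),
          ∏ i, Z i (ρ i) = (Z 0 (ρ 0) * Z j (ρ j)) * ∏ i ∈ ({0, j} : Finset (Fin N))ᶜ, Z i (ρ i) := by
        intro ρ
        rw [← Finset.prod_mul_prod_compl ({0, j} : Finset (Fin N)) (fun i => Z i (ρ i))]
        congr 1
        exact Finset.prod_pair hj.symm
      rw [hsplit σ, hsplit τ] at hp
      have hR : (∏ i ∈ ({0, j} : Finset (Fin N))ᶜ, Z i (σ i)) =
          ∏ i ∈ ({0, j} : Finset (Fin N))ᶜ, Z i (τ i) := by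
        refine Finset.prod_congr rfl fun i hi => ?_
        simp only [Finset.mem_compl, Finset.mem_insert, Finset.mem_singleton, not_or] at hi
        rw [hσi i hi.1 hi.2]
      rw [hR] at hp
      have hRne : (∏ i ∈ ({0, j} : Finset (Fin N))ᶜ, Z i (τ i)) ≠ 0 :=
        Finset.prod_ne_zero_iff.mpr fun i _ => hne i (τ i)
      have := mul_right_cancel₀ hRne hp
      rw [hσ0, hσj, hτ0, hτj] at this
      linear_combination this
    refine ⟨fun j => Z j 0 / Z 0 0, fun k => Z 0 k, fun j => ?_, fun k => hZ 0 k, fun j k => ?_⟩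
    · rw [norm_div, hZ, hZ]
      norm_num
    · have h00 := hne 0 0
      field_simp
      linear_combination -key j k
  · rintro ⟨ξ, ζ, _, _, hZk⟩ σ τ
    simp only [hZk]
    rw [Finset.prod_mul_distrib, Finset.prod_mul_distrib,
      Equiv.prod_comp σ ζ, Equiv.prod_comp τ ζ]
end

section
/- Let f_1, …, f_N be nonnegative functions on {1,…,N}, let μ be the uniform probability measure on the symmetric group S_N, and let π_j(σ) = σ(j). Then ∫_{S_N} ∏_{j=1}^N f_j(σ(j)) dμ(σ) ≤ ∏_{j=1}^N ||f_j ∘ π_j||_{L²(S_N,μ)}, where ||g||_{L²} = (∑_{σ} g(σ)²/N!)^{1/2}. -/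
open scoped BigOperators
open Finset

noncomputable def gg (t : ℝ) : ℝ := t * Real.log t - (1 - t) * Real.log (1 - t)

noncomputable def gg' (t : ℝ) : ℝ := Real.log t + Real.log (1 - t) + 2

lemma continuous_gg : Continuous gg := by
  have h1 : Continuous fun t : ℝ => t * Real.log t := Real.continuous_mul_log
  have h2 : Continuous fun t : ℝ => (1 - t) * Real.log (1 - t) :=
    Real.continuous_mul_log.comp (continuous_const.sub continuous_id)
  exact h1.sub h2

lemma hasDerivAt_gg {t : ℝ} (h0 : t ≠ 0) (h1 : t ≠ 1) : HasDerivAt gg (gg' t) t := by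
  have h2 : (1:ℝ) - t ≠ 0 := sub_ne_zero.mpr (Ne.symm h1)
  have ha : HasDerivAt (fun s : ℝ => s * Real.log s) (Real.log t + 1) t :=
    Real.hasDerivAt_mul_log h0
  have hb : HasDerivAt (fun s : ℝ => (1 - s) * Real.log (1 - s))
      ((Real.log (1 - t) + 1) * (-1)) t := by
    have hc : HasDerivAt (fun s : ℝ => (1 : ℝ) - s) (-1) t := by
      exact (hasDerivAt_id' t).const_sub 1
    exact (Real.hasDerivAt_mul_log h2).comp t hc
  have := ha.sub hb
  refine this.congr_deriv ?_
  unfold gg'; ring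

/-- product comparison used for derivative signs -/
lemma prod_le_prod_aux {u v : ℝ} (hu : 0 ≤ u) (huv : u ≤ v) (hs : u + v ≤ 1) :
    u * (1 - u) ≤ v * (1 - v) := by nlinarith

lemma gg'_le_gg' {u v : ℝ} (hu : 0 < u) (huv : u ≤ v) (hv : v < 1) (hs : u + v ≤ 1) :
    gg' u ≤ gg' v := by
  have hv0 : 0 < v := lt_of_lt_of_le hu huv
  have hu1 : u < 1 := lt_of_le_of_lt huv hv
  have h1 : u * (1 - u) ≤ v * (1 - v) := prod_le_prod_aux hu.le huv hs
  have h2 : (0:ℝ) < u * (1 - u) := mul_pos hu (by linarith)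
  have h3 : Real.log (u * (1 - u)) ≤ Real.log (v * (1 - v)) :=
    Real.log_le_log h2 h1
  rw [Real.log_mul hu.ne' (by linarith), Real.log_mul hv0.ne' (by linarith)] at h3
  unfold gg'; linarith

/-- tangent line bound for `gg` on `[0, 1/2]` at a point `μ ∈ (0, 1/2]`. -/
lemma tangent_gg {μ t : ℝ} (hμ0 : 0 < μ) (hμ : μ ≤ 1/2) (ht0 : 0 ≤ t) (ht : t ≤ 1/2) :
    gg μ + gg' μ * (t - μ) ≤ gg t := by
  set L : ℝ → ℝ := fun s => gg s - gg' μ * s with hL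
  have hLd : ∀ x : ℝ, x ≠ 0 → x ≠ 1 → HasDerivAt L (gg' x - gg' μ) x := by
    intro x hx0 hx1
    have := (hasDerivAt_gg hx0 hx1).sub ((hasDerivAt_id x).const_mul (gg' μ))
    exact this.congr_deriv (by ring)
  have key : L μ ≤ L t := by
    rcases le_total t μ with h | h
    · -- antitone on [0, μ]
      have hanti : AntitoneOn L (Set.Icc 0 μ) := by
        apply antitoneOn_of_deriv_nonpos (convex_Icc _ _)
        · exact (continuous_gg.sub (continuous_const.mul continuous_id)).continuousOn
        · intro x hx
          rw [interior_Icc] at hx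
          exact (hLd x hx.1.ne' (by nlinarith [hx.2])).differentiableAt.differentiableWithinAt
        · intro x hx
          rw [interior_Icc] at hx
          rw [(hLd x hx.1.ne' (by nlinarith [hx.2])).deriv]
          have := gg'_le_gg' hx.1 hx.2.le (by linarith) (by linarith [hx.2])
          linarith
      exact hanti ⟨ht0, h⟩ ⟨hμ0.le, le_rfl⟩ h
    · -- monotone on [μ, 1/2]
      have hmono : MonotoneOn L (Set.Icc μ (1/2)) := by
        apply monotoneOn_of_deriv_nonneg (convex_Icc _ _)
        · exact (continuous_gg.sub (continuous_const.mul continuous_id)).continuousOn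
        · intro x hx
          rw [interior_Icc] at hx
          have hx0 : (0:ℝ) < x := lt_of_lt_of_le hμ0 hx.1.le
          exact (hLd x hx0.ne' (by linarith [hx.2])).differentiableAt.differentiableWithinAt
        · intro x hx
          rw [interior_Icc] at hx
          have hx0 : (0:ℝ) < x := lt_of_lt_of_le hμ0 hx.1.le
          rw [(hLd x hx0.ne' (by linarith [hx.2])).deriv]
          have := gg'_le_gg' hμ0 hx.1.le (by linarith [hx.2]) (by linarith [hx.1, hx.2])
          linarith
      exact hmono ⟨le_rfl, hμ⟩ ⟨h, ht⟩ h
  have : gg μ - gg' μ * μ ≤ gg t - gg' μ * t := key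
  linarith
/-- ψ a = gg a + n · gg((1-a)/n) is monotone on [1/(n+1), 1]. -/
lemma psi_mono (n : ℕ) (hn : 1 ≤ n) :
    MonotoneOn (fun a : ℝ => gg a + (n:ℝ) * gg ((1 - a) / n))
      (Set.Icc (1/((n:ℝ)+1)) 1) := by
  have hn0 : (0:ℝ) < n := by exact_mod_cast hn
  set ψ : ℝ → ℝ := fun a => gg a + (n:ℝ) * gg ((1 - a) / n) with hψ
  have hψd : ∀ a : ℝ, a ≠ 0 → a ≠ 1 → (1-a)/(n:ℝ) ≠ 1 →
      HasDerivAt ψ (gg' a - gg' ((1-a)/n)) a := by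
    intro a ha0 ha1 hu1
    have hu : HasDerivAt (fun a : ℝ => (1 - a) / (n:ℝ)) (-1/n) a := by
      have h : HasDerivAt (fun a : ℝ => (1 : ℝ) - a) (-1) a := by
        exact (hasDerivAt_id' a).const_sub 1
      simpa [div_eq_mul_inv] using h.div_const (n:ℝ)
    have hu0 : (1-a)/(n:ℝ) ≠ 0 := by
      intro h
      rw [div_eq_zero_iff] at h
      rcases h with h | h
      · exact ha1 (by linarith)
      · exact hn0.ne' h
    have h2 := ((hasDerivAt_gg hu0 hu1).comp a hu).const_mul (n:ℝ)
    have h3 := (hasDerivAt_gg ha0 ha1).add h2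
    refine h3.congr_deriv ?_
    field_simp; ring
  have hkey : ∀ x : ℝ, 1/((n:ℝ)+1) < x → x < 1 →
      0 < x ∧ (1-x)/(n:ℝ) ≤ x ∧ 0 < (1-x)/(n:ℝ) ∧ (1-x)/(n:ℝ) + x ≤ 1 := by
    intro x h1 h2
    have hx0 : (0:ℝ) < x := lt_of_lt_of_le (by positivity) h1.le
    rw [div_lt_iff₀ (by positivity : (0:ℝ) < (n:ℝ)+1)] at h1
    refine ⟨hx0, ?_, ?_, ?_⟩
    · rw [div_le_iff₀ hn0]; nlinarith
    · exact div_pos (by linarith) hn0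
    · have : (1-x)/(n:ℝ) ≤ (1-x)/1 := by
        apply div_le_div_of_nonneg_left (by linarith) one_pos
        exact_mod_cast hn
      simp at this; linarith
  apply monotoneOn_of_deriv_nonneg (convex_Icc _ _)
  · apply Continuous.continuousOn
    exact continuous_gg.add (continuous_const.mul (continuous_gg.comp
      ((continuous_const.sub continuous_id).div_const _)))
  · intro x hx
    rw [interior_Icc] at hx
    obtain ⟨hx0, hux, hu0, hsum⟩ := hkey x hx.1 hx.2
    exact (hψd x hx0.ne' hx.2.ne
      (lt_of_le_of_lt hux hx.2).ne).differentiableAt.differentiableWithinAt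
  · intro x hx
    rw [interior_Icc] at hx
    obtain ⟨hx0, hux, hu0, hsum⟩ := hkey x hx.1 hx.2
    rw [(hψd x hx0.ne' hx.2.ne (lt_of_le_of_lt hux hx.2).ne).deriv]
    have := gg'_le_gg' hu0 hux hx.2 hsum
    linarith

lemma gg_zero : gg 0 = 0 := by simp [gg]

/-- The simplex minimization lemma: ∑ gg(p k) ≥ (n+1) · gg(1/(n+1)). -/
lemma gg_sum_ge (n : ℕ) (hn : 1 ≤ n) (p : Fin (n+1) → ℝ) (h0 : ∀ k, 0 ≤ p k)
    (hs : ∑ k, p k = 1) : ((n:ℝ)+1) * gg (1/((n:ℝ)+1)) ≤ ∑ k, gg (p k) := by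
  have hN0 : (0:ℝ) < (n:ℝ)+1 := by positivity
  have hn0 : (0:ℝ) < n := by exact_mod_cast hn
  have hN2 : (2:ℝ) ≤ (n:ℝ)+1 := by
    have : (1:ℝ) ≤ n := by exact_mod_cast hn
    linarith
  have hμ0 : (0:ℝ) < 1/((n:ℝ)+1) := by positivity
  have hμh : 1/((n:ℝ)+1) ≤ 1/2 := by
    rw [div_le_div_iff₀ hN0 two_pos]; linarith
  by_cases hA : ∀ k, p k ≤ 1/2
  · -- all small: tangent at 1/(n+1)
    have h1 : ∀ k, gg (1/((n:ℝ)+1)) + gg' (1/((n:ℝ)+1)) * (p k - 1/((n:ℝ)+1)) ≤ gg (p k) :=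
      fun k => tangent_gg hμ0 hμh (h0 k) (hA k)
    have h2 := Finset.sum_le_sum (fun k (_ : k ∈ Finset.univ) => h1 k)
    rw [Finset.sum_add_distrib, ← Finset.mul_sum, Finset.sum_sub_distrib, hs] at h2
    simp only [Finset.sum_const, Finset.card_univ, Fintype.card_fin] at h2
    have he : ((n:ℝ)+1) - ((n+1 : ℕ):ℝ) * (1/((n:ℝ)+1)) * ((n:ℝ)+1) = 0 := by
      push_cast; field_simp; ring
    -- rearrange
    have : (1 : ℝ) - ((n+1:ℕ):ℝ) * (1/((n:ℝ)+1)) = 0 := by push_cast; field_simp; ring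
    calc ((n:ℝ)+1) * gg (1/((n:ℝ)+1))
        = ((n+1:ℕ):ℝ) * gg (1/((n:ℝ)+1)) + gg' (1/((n:ℝ)+1)) *
            (1 - ((n+1:ℕ):ℝ) * (1/((n:ℝ)+1))) := by rw [this]; push_cast; ring
      _ ≤ ∑ k, gg (p k) := by
          simpa [Finset.mul_sum] using h2
  · push_neg at hA
    obtain ⟨k0, hk0⟩ := hA
    set a := p k0 with ha
    have ha1 : a ≤ 1 := by
      rw [← hs]
      exact Finset.single_le_sum (fun k _ => h0 k) (Finset.mem_univ k0)
    have hrest : ∑ k ∈ Finset.univ.erase k0, p k = 1 - a := by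
      rw [← hs]; rw [Finset.sum_erase_eq_sub (Finset.mem_univ k0)]
    have hcard : (Finset.univ.erase k0).card = n := by
      rw [Finset.card_erase_of_mem (Finset.mem_univ k0), Finset.card_univ,
        Fintype.card_fin]; rfl
    have hsmall : ∀ k ∈ Finset.univ.erase k0, p k ≤ 1 - a := by
      intro k hk
      have hne := Finset.ne_of_mem_erase hk
      have : p k + a ≤ 1 := by
        rw [← hs]
        have := Finset.sum_le_sum_of_subset_of_nonneg
          (s := {k, k0}) (t := Finset.univ) (by simp) (fun i _ _ => h0 i)
        rwa [Finset.sum_pair hne] at this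
      linarith
    -- main per-case bound: ∑_{k≠k0} gg(p k) ≥ n * gg((1-a)/n)
    have hmain : (n:ℝ) * gg ((1-a)/n) ≤ ∑ k ∈ Finset.univ.erase k0, gg (p k) := by
      rcases eq_or_lt_of_le ha1 with h1 | h1
      · -- a = 1: all others are 0
        have hz : ∀ k ∈ Finset.univ.erase k0, p k = 0 := by
          intro k hk
          have h2 : ∑ k ∈ Finset.univ.erase k0, p k = 0 := by rw [hrest, ← h1]; ring
          have := (Finset.sum_eq_zero_iff_of_nonneg (fun i _ => h0 i)).mp h2
          exact this k hk
        rw [Finset.sum_congr rfl (fun k hk => by rw [hz k hk, gg_zero])]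
        rw [← h1]
        simp [gg_zero]
      · -- a < 1 : tangent at b = (1-a)/n ∈ (0, 1/2]
        have hb0 : (0:ℝ) < (1-a)/n := div_pos (by linarith) hn0
        have hbh : (1-a)/(n:ℝ) ≤ 1/2 := by
          rw [div_le_div_iff₀ hn0 two_pos]
          nlinarith
        have h1' : ∀ k ∈ Finset.univ.erase k0,
            gg ((1-a)/n) + gg' ((1-a)/n) * (p k - (1-a)/n) ≤ gg (p k) := by
          intro k hk
          exact tangent_gg hb0 hbh (h0 k) (le_trans (hsmall k hk) (by linarith))
        have h2 := Finset.sum_le_sum h1'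
        rw [Finset.sum_add_distrib, ← Finset.mul_sum, Finset.sum_sub_distrib, hrest] at h2
        simp only [Finset.sum_const, hcard, nsmul_eq_mul] at h2
        have hzero : (1 - a) - (n:ℝ) * ((1-a)/n) = 0 := by field_simp; ring
        calc (n:ℝ) * gg ((1-a)/n)
            = (n:ℝ) * gg ((1-a)/n) + gg' ((1-a)/n) * ((1 - a) - (n:ℝ) * ((1-a)/n)) := by
              rw [hzero]; ring
          _ ≤ ∑ k ∈ Finset.univ.erase k0, gg (p k) := by
              simpa [Finset.mul_sum] using h2
    -- combine with psi monotonicity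
    have hψm := psi_mono n hn
    have hmem1 : (1/((n:ℝ)+1)) ∈ Set.Icc (1/((n:ℝ)+1)) (1:ℝ) := by
      refine ⟨le_refl _, ?_⟩
      rw [div_le_one hN0]; linarith
    have h12 : 1/((n:ℝ)+1) ≤ a := le_trans hμh (by linarith)
    have hmema : a ∈ Set.Icc (1/((n:ℝ)+1)) (1:ℝ) := ⟨h12, ha1⟩
    have hψle := hψm hmem1 hmema h12
    simp only [] at hψle
    have hb_eq : (1 - 1/((n:ℝ)+1))/(n:ℝ) = 1/((n:ℝ)+1) := by
      field_simp; ring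
    rw [hb_eq] at hψle
    have hfinal : ((n:ℝ)+1) * gg (1/((n:ℝ)+1)) ≤ gg a + (n:ℝ) * gg ((1-a)/n) := by
      calc ((n:ℝ)+1) * gg (1/((n:ℝ)+1))
          = gg (1/((n:ℝ)+1)) + (n:ℝ) * gg (1/((n:ℝ)+1)) := by ring
        _ ≤ gg a + (n:ℝ) * gg ((1-a)/n) := hψle
    calc ((n:ℝ)+1) * gg (1/((n:ℝ)+1)) ≤ gg a + (n:ℝ) * gg ((1-a)/n) := hfinal
      _ ≤ gg a + ∑ k ∈ Finset.univ.erase k0, gg (p k) := by linarith [hmain]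
      _ = ∑ k, gg (p k) := by
          rw [ha]
          exact Finset.add_sum_erase _ (fun k => gg (p k)) (Finset.mem_univ k0)
noncomputable def Dv (N : ℕ) (q : Fin N → ℝ) : ℝ := ∑ k, q k * Real.log (N * q k)

noncomputable def DP (N : ℕ) (F : Equiv.Perm (Fin N) → ℝ) : ℝ :=
  ∑ σ : Equiv.Perm (Fin N), F σ * Real.log (N.factorial * F σ)

noncomputable def marg (N : ℕ) (F : Equiv.Perm (Fin N) → ℝ) (j k : Fin N) : ℝ :=
  ∑ σ : Equiv.Perm (Fin N), if σ j = k then F σ else 0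

lemma mul_log_div_le {r w : ℝ} (hw : 0 ≤ w) (h : r ≠ 0 → 0 < r ∧ 0 < w) :
    r * Real.log (w / r) ≤ w - r := by
  rcases eq_or_ne r 0 with h0 | h0
  · simp [h0, hw]
  · obtain ⟨hr, hwp⟩ := h h0
    have hd : 0 < w / r := div_pos hwp hr
    have := Real.log_le_sub_one_of_pos hd
    calc r * Real.log (w / r) ≤ r * (w / r - 1) := by
          exact mul_le_mul_of_nonneg_left this hr.le
      _ = w - r := by field_simp

lemma gibbs_excl {N : ℕ} (p J : Fin N → ℝ) (k : Fin N)
    (hp0 : ∀ c, 0 ≤ p c) (hps : ∑ c, p c = 1)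
    (hJ0 : ∀ c, 0 ≤ J c) (hJp : ∀ c, J c ≤ p c) (hJk : J k = 0) :
    -((∑ c, J c) * Real.log (1 - p k)) ≤ ∑ c, J c * Real.log (J c / (p c * (∑ c, J c))) := by
  set M := ∑ c, J c with hM
  have hpk1 : p k ≤ 1 := by
    rw [← hps]; exact Finset.single_le_sum (fun c _ => hp0 c) (Finset.mem_univ k)
  have hM0 : 0 ≤ M := Finset.sum_nonneg (fun c _ => hJ0 c)
  have hM1 : M ≤ 1 - p k := by
    have h1 : ∀ c ∈ Finset.univ, J c ≤ (if c = k then 0 else p c) := by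
      intro c _
      by_cases hc : c = k
      · simp [hc, hJk]
      · simp [hc, hJp c]
    have h2 := Finset.sum_le_sum h1
    have h3 : ∑ c, (if c = k then 0 else p c) = 1 - p k := by
      have : ∀ c, (if c = k then 0 else p c) = p c - (if c = k then p c else 0) := by
        intro c; by_cases hc : c = k <;> simp [hc]
      rw [Finset.sum_congr rfl (fun c _ => this c), Finset.sum_sub_distrib, hps,
        Finset.sum_ite_eq' Finset.univ k p]
      simp
    rw [h3] at h2; exact h2
  set w : Fin N → ℝ := fun c => (if c = k then 0 else p c) * (M / (1 - p k)) with hw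
  have hsw : ∑ c, w c = M := by
    rcases eq_or_lt_of_le hpk1 with h1 | h1
    · have hMz : M = 0 := le_antisymm (by rw [← h1] at hM1; simpa using hM1) hM0
      have : ∀ c, w c = 0 := by intro c; simp [hw, hMz]
      rw [Finset.sum_congr rfl (fun c _ => this c), hMz]; simp
    · have h2 : (0:ℝ) < 1 - p k := by linarith
      have h3 : ∑ c, (if c = k then 0 else p c) = 1 - p k := by
        have : ∀ c, (if c = k then 0 else p c) = p c - (if c = k then p c else 0) := by
          intro c; by_cases hc : c = k <;> simp [hc]
        rw [Finset.sum_congr rfl (fun c _ => this c), Finset.sum_sub_distrib, hps,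
          Finset.sum_ite_eq' Finset.univ k p]
        simp
      rw [hw]
      rw [← Finset.sum_mul, h3]
      field_simp
  have h1 : ∀ c ∈ Finset.univ,
      -(J c * Real.log (1 - p k)) - J c * Real.log (J c / (p c * M)) ≤ w c - J c := by
    intro c _
    rcases eq_or_ne (J c) 0 with hc | hc
    · have : 0 ≤ w c := by
        apply mul_nonneg
        · by_cases hck : c = k <;> simp [hck, hp0 c]
        · apply div_nonneg hM0; linarith
      simp only [hc, zero_mul, neg_zero, sub_zero, zero_sub, sub_zero]
      linarith
    · have hJc : 0 < J c := lt_of_le_of_ne (hJ0 c) (Ne.symm hc)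
      have hpc : 0 < p c := lt_of_lt_of_le hJc (hJp c)
      have hMp : 0 < M := lt_of_lt_of_le hJc (Finset.single_le_sum (fun c _ => hJ0 c)
        (Finset.mem_univ c))
      have hck : c ≠ k := by intro h; rw [h, hJk] at hc; exact hc rfl
      have hpk : 0 < 1 - p k := lt_of_lt_of_le hMp hM1
      have hwc : w c = p c * M / (1 - p k) := by
        simp [hw, hck]; ring
      have hlog : Real.log (w c / J c)
          = -Real.log (1 - p k) - Real.log (J c / (p c * M)) := by
        rw [hwc]
        rw [Real.log_div (by positivity) hc, Real.log_div hc (by positivity),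
          Real.log_div (by positivity) hpk.ne', Real.log_mul hpc.ne' hMp.ne']
        ring
      have := mul_log_div_le (by positivity : (0:ℝ) ≤ w c)
        (fun _ => ⟨hJc, by rw [hwc]; positivity⟩)
      rw [hlog] at this
      linarith
  have h2 := Finset.sum_le_sum h1
  have h3 : ∑ c, (-(J c * Real.log (1 - p k)) - J c * Real.log (J c / (p c * M)))
      = M * (-Real.log (1 - p k)) - ∑ c, J c * Real.log (J c / (p c * M)) := by
    rw [Finset.sum_sub_distrib]
    congr 1
    rw [hM, Finset.sum_mul]
    exact Finset.sum_congr rfl (fun c _ => by ring)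
  have h4 : ∑ c, (w c - J c) = 0 := by
    rw [Finset.sum_sub_distrib, hsw, ← hM, sub_self]
  rw [h3, h4] at h2
  linarith
lemma bracket (n : ℕ) (hn : 1 ≤ n) (p : Fin (n+1) → ℝ) (h0 : ∀ k, 0 ≤ p k)
    (hs : ∑ k, p k = 1) :
    (n:ℝ) * Real.log (((n:ℝ)+1)/n) + ∑ k, (1 - p k) * Real.log (1 - p k)
      ≤ Dv (n+1) p := by
  have hn0 : (0:ℝ) < n := by exact_mod_cast hn
  have hN0 : (0:ℝ) < (n:ℝ)+1 := by positivity
  have key := gg_sum_ge n hn p h0 hs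
  have e1 : ((n:ℝ)+1) * gg (1/((n:ℝ)+1))
      = (n:ℝ) * Real.log (((n:ℝ)+1)/(n:ℝ)) - Real.log ((n:ℝ)+1) := by
    unfold gg
    have h1 : 1 - 1/((n:ℝ)+1) = (n:ℝ)/((n:ℝ)+1) := by field_simp; ring
    rw [h1, one_div, Real.log_inv, Real.log_div hn0.ne' hN0.ne',
      Real.log_div hN0.ne' hn0.ne']
    field_simp
    ring
  have e2 : Dv (n+1) p = ∑ k, gg (p k) + ∑ k, (1 - p k) * Real.log (1 - p k)
      + Real.log ((n:ℝ)+1) := by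
    unfold Dv
    have hterm : ∀ k, p k * Real.log ((((n+1):ℕ):ℝ) * p k)
        = (gg (p k) + (1 - p k) * Real.log (1 - p k)) + p k * Real.log ((n:ℝ)+1) := by
      intro k
      rcases eq_or_ne (p k) 0 with h | h
      · simp [h, gg]
      · push_cast
        rw [Real.log_mul hN0.ne' h]
        unfold gg; ring
    rw [Finset.sum_congr rfl (fun k _ => hterm k), Finset.sum_add_distrib,
      Finset.sum_add_distrib, ← Finset.sum_mul, hs]
    ring
  linarith
set_option maxHeartbeats 2000000 in
theorem ent_sub : ∀ (N : ℕ) (F : Equiv.Perm (Fin N) → ℝ), (∀ σ, 0 ≤ F σ) →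
    (∑ σ, F σ = 1) → ∑ j, Dv N (marg N F j) ≤ 2 * DP N F := by
  intro N
  induction N with
  | zero =>
    intro F h0 h1
    have huniq : ∀ σ : Equiv.Perm (Fin 0), σ = 1 := fun σ => Equiv.ext (fun x => x.elim0)
    have hF1 : F 1 = 1 := by
      have e : ∑ σ : Equiv.Perm (Fin 0), F σ = ∑ _σ : Equiv.Perm (Fin 0), F 1 :=
        Finset.sum_congr rfl (fun σ _ => congrArg F (huniq σ))
      rw [e] at h1
      simpa using h1
    have hDP : DP 0 F = 0 := by
      unfold DP
      apply Finset.sum_eq_zero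
      intro σ _
      rw [huniq σ, hF1]
      simp
    simp [hDP]
  | succ n IH =>
    rcases Nat.eq_zero_or_pos n with hn0 | hn1
    · -- N = 1 base case
      subst hn0
      intro F h0 h1
      have huniq : ∀ σ : Equiv.Perm (Fin 1), σ = 1 := fun σ =>
        Equiv.ext (fun x => Subsingleton.elim _ _)
      have hF1 : F 1 = 1 := by
        have e : ∑ σ : Equiv.Perm (Fin 1), F σ = ∑ _σ : Equiv.Perm (Fin 1), F 1 :=
          Finset.sum_congr rfl (fun σ _ => congrArg F (huniq σ))
        rw [e] at h1
        simpa using h1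
      have hDP : DP 1 F = 0 := by
        unfold DP
        apply Finset.sum_eq_zero
        intro σ _
        rw [huniq σ, hF1]
        simp
      have hmarg : ∀ j k : Fin 1, marg 1 F j k = 1 := by
        intro j k
        unfold marg
        have e : ∑ σ : Equiv.Perm (Fin 1), (if σ j = k then F σ else 0)
            = ∑ σ : Equiv.Perm (Fin 1), F σ :=
          Finset.sum_congr rfl (fun σ _ => if_pos (Subsingleton.elim _ _))
        rw [e, h1]
      have hDv : Dv 1 (marg 1 F 0) = 0 := by
        unfold Dv
        simp [hmarg]
      rw [hDP]
      rw [Fin.sum_univ_one]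
      rw [hDv]
      norm_num
    · -- main inductive step, n ≥ 1
      intro F h0 h1
      have hn0R : (0:ℝ) < n := by exact_mod_cast hn1
      have hN0R : (0:ℝ) < (n:ℝ)+1 := by positivity
      set G := (Equiv.Perm.decomposeFin (n := n)).symm with hG
      have hsum : ∀ h : Equiv.Perm (Fin (n+1)) → ℝ,
          ∑ σ, h σ = ∑ c : Fin (n+1), ∑ τ : Equiv.Perm (Fin n), h (G (c, τ)) := by
        intro h
        rw [← Equiv.sum_comp G h, Fintype.sum_prod_type]
      set p : Fin (n+1) → ℝ := fun c => ∑ τ, F (G (c, τ)) with hp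
      have hp0 : ∀ c, 0 ≤ p c := fun c => Finset.sum_nonneg (fun τ _ => h0 _)
      have hps : ∑ c, p c = 1 := by rw [← hsum F]; exact h1
      have hpm : marg (n+1) F 0 = p := by
        funext c
        unfold marg
        rw [hsum (fun σ => if σ 0 = c then F σ else 0)]
        have : ∀ c' : Fin (n+1), ∀ τ : Equiv.Perm (Fin n),
            (if G (c', τ) 0 = c then F (G (c', τ)) else 0)
              = if c' = c then F (G (c', τ)) else 0 := by
          intro c' τ
          rw [hG, Equiv.Perm.decomposeFin_symm_apply_zero]
        rw [Finset.sum_congr rfl (fun c' _ => Finset.sum_congr rfl (fun τ _ => this c' τ))]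
        have h2 : ∀ c' : Fin (n+1), (∑ τ : Equiv.Perm (Fin n),
            if c' = c then F (G (c', τ)) else 0) = if c' = c then p c' else 0 := by
          intro c'
          split_ifs with h <;> simp [hp]
        rw [Finset.sum_congr rfl (fun c' _ => h2 c')]
        rw [Finset.sum_ite_eq' Finset.univ c p]
        simp
      set Fc : Fin (n+1) → Equiv.Perm (Fin n) → ℝ :=
        fun c τ => if p c = 0 then ((n.factorial : ℝ))⁻¹ else F (G (c, τ)) / p c with hFc
      have hfac0 : (0:ℝ) < (n.factorial : ℝ) := by exact_mod_cast Nat.factorial_pos n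
      have hFc0 : ∀ c τ, 0 ≤ Fc c τ := by
        intro c τ
        rw [hFc]
        dsimp only
        split_ifs with h
        · positivity
        · exact div_nonneg (h0 _) (hp0 c)
      have hFcs : ∀ c, ∑ τ, Fc c τ = 1 := by
        intro c
        rcases eq_or_ne (p c) 0 with h | h
        · simp only [hFc, if_pos h]
          rw [Finset.sum_const, Finset.card_univ, Fintype.card_perm, Fintype.card_fin,
            nsmul_eq_mul]
          exact mul_inv_cancel₀ hfac0.ne'
        · simp only [hFc, if_neg h]
          rw [← Finset.sum_div]
          rw [show ∑ τ, F (G (c, τ)) = p c from rfl]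
          exact div_self h
      have hFcF : ∀ c τ, F (G (c, τ)) = p c * Fc c τ := by
        intro c τ
        rcases eq_or_ne (p c) 0 with h | h
        · have hz : ∀ τ' ∈ Finset.univ, F (G (c, τ')) = 0 := by
            have := (Finset.sum_eq_zero_iff_of_nonneg
              (fun τ' (_ : τ' ∈ Finset.univ) => h0 (G (c, τ')))).mp (by rw [← h])
            exact this
          rw [hz τ (Finset.mem_univ τ), h, zero_mul]
        · simp only [hFc, if_neg h]
          field_simp
      have hchain : DP (n+1) F = Dv (n+1) p + ∑ c, p c * DP n (Fc c) := by
        unfold DP Dv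
        rw [hsum (fun σ => F σ * Real.log (((n+1).factorial : ℝ) * F σ))]
        rw [← Finset.sum_add_distrib]
        apply Finset.sum_congr rfl
        intro c _
        have hper : ∀ τ, F (G (c,τ)) * Real.log (((n+1).factorial : ℝ) * F (G (c,τ)))
            = p c * (Fc c τ * Real.log ((n.factorial:ℝ) * Fc c τ))
              + (p c * Real.log ((((n+1):ℕ):ℝ) * p c)) * Fc c τ := by
          intro τ
          rcases eq_or_ne (p c) 0 with h | h
          · rw [hFcF c τ, h]
            simp
          · rcases eq_or_ne (Fc c τ) 0 with h2 | h2
            · rw [hFcF c τ, h2]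
              simp
            · have hpc : 0 < p c := lt_of_le_of_ne (hp0 c) (Ne.symm h)
              have hFcp : 0 < Fc c τ := lt_of_le_of_ne (hFc0 c τ) (Ne.symm h2)
              rw [hFcF c τ]
              have hlog : Real.log (((n+1).factorial:ℝ) * (p c * Fc c τ))
                  = Real.log ((n.factorial:ℝ) * Fc c τ)
                    + Real.log ((((n+1):ℕ):ℝ) * p c) := by
                rw [← Real.log_mul (by positivity) (by positivity)]
                congr 1
                rw [Nat.factorial_succ]
                push_cast
                ring
              rw [hlog]
              ring
        rw [Finset.sum_congr rfl (fun τ _ => hper τ), Finset.sum_add_distrib,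
          ← Finset.mul_sum, ← Finset.mul_sum, hFcs c]
        rw [show (∑ τ, Fc c τ * Real.log ((n.factorial:ℝ) * Fc c τ)) = DP n (Fc c) from rfl]
        ring
      -- J quantities: joint law of (σ 0, σ i.succ)
      set Jm : Fin n → Fin (n+1) → Fin (n+1) → ℝ :=
        fun i c k => ∑ τ, if (Equiv.swap 0 c) ((τ i).succ) = k then F (G (c, τ)) else 0
        with hJm
      have hJ0 : ∀ i c k, 0 ≤ Jm i c k := by
        intro i c k
        apply Finset.sum_nonneg
        intro τ _
        split_ifs
        · exact h0 _
        · exact le_refl 0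
      have hJsum : ∀ i c, ∑ k, Jm i c k = p c := by
        intro i c
        rw [hJm]
        dsimp only
        rw [Finset.sum_comm]
        apply Finset.sum_congr rfl
        intro τ _
        rw [Finset.sum_ite_eq Finset.univ ((Equiv.swap 0 c) ((τ i).succ))
          (fun _ => F (G (c, τ)))]
        simp
      have hJcc : ∀ i c, Jm i c c = 0 := by
        intro i c
        apply Finset.sum_eq_zero
        intro τ _
        rw [if_neg]
        intro hEq
        have h2 := (Equiv.swap 0 c).injective
          (hEq.trans (Equiv.swap_apply_left 0 c).symm)
        exact (Fin.succ_ne_zero (τ i)) h2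
      have hJle : ∀ i c k, Jm i c k ≤ p c := by
        intro i c k
        rw [← hJsum i c]
        exact Finset.single_le_sum (fun k' _ => hJ0 i c k') (Finset.mem_univ k)
      have hmarg_succ : ∀ (i : Fin n) k, marg (n+1) F i.succ k = ∑ c, Jm i c k := by
        intro i k
        unfold marg
        rw [hsum (fun σ => if σ i.succ = k then F σ else 0)]
        apply Finset.sum_congr rfl
        intro c _
        apply Finset.sum_congr rfl
        intro τ _
        rw [hG]
        rw [Equiv.Perm.decomposeFin_symm_apply_succ]
      have hmargsum1 : ∀ (c : Fin (n+1)) (i : Fin n), ∑ x, marg n (Fc c) i x = 1 := by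
        intro c i
        unfold marg
        rw [Finset.sum_comm]
        rw [← hFcs c]
        apply Finset.sum_congr rfl
        intro τ _
        rw [Finset.sum_ite_eq Finset.univ (τ i) (fun _ => Fc c τ)]
        simp
      -- the (a) identity
      have haid : ∀ (i : Fin n) (c : Fin (n+1)),
          p c * Dv n (marg n (Fc c) i) + p c * Real.log (((n:ℝ)+1)/n)
            = ∑ k, Jm i c k * Real.log ((((n+1):ℕ):ℝ) * Jm i c k / p c) := by
        intro i c
        rcases eq_or_ne (p c) 0 with h | h
        · have hJz : ∀ k, Jm i c k = 0 := fun k =>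
            le_antisymm (h ▸ hJle i c k) (hJ0 i c k)
          rw [h]
          simp [hJz]
        · have hpc : 0 < p c := lt_of_le_of_ne (hp0 c) (Ne.symm h)
          set φ : Fin n → Fin (n+1) := fun x => (Equiv.swap 0 c) (x.succ) with hφ
          have hφinj : Function.Injective φ := by
            intro x y hxy
            exact Fin.succ_injective n ((Equiv.swap 0 c).injective hxy)
          have hφc : ∀ x, φ x ≠ c := by
            intro x hEq
            have h2 := (Equiv.swap 0 c).injective
              (hEq.trans (Equiv.swap_apply_left 0 c).symm)
            exact (Fin.succ_ne_zero x) h2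
          have himg : Finset.image φ Finset.univ = Finset.univ.erase c := by
            apply Finset.eq_of_subset_of_card_le
            · intro k hk
              rw [Finset.mem_image] at hk
              obtain ⟨x, _, hx⟩ := hk
              rw [Finset.mem_erase]
              exact ⟨hx ▸ hφc x, Finset.mem_univ k⟩
            · rw [Finset.card_erase_of_mem (Finset.mem_univ c),
                Finset.card_image_of_injective _ hφinj]
              simp
          have hJφ : ∀ x, Jm i c (φ x) = p c * marg n (Fc c) i x := by
            intro x
            rw [hJm]
            dsimp only
            unfold marg
            rw [Finset.mul_sum]
            apply Finset.sum_congr rfl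
            intro τ _
            rw [hFcF c τ]
            have hiff : (Equiv.swap 0 c) ((τ i).succ) = φ x ↔ τ i = x := by
              constructor
              · intro hEq
                exact hφinj hEq
              · intro hEq
                rw [hφ]
                dsimp only
                rw [hEq]
            rw [if_congr hiff rfl rfl]
            split_ifs
            · rfl
            · rw [mul_zero]
          have hperx : ∀ x, Jm i c (φ x) * Real.log ((((n+1):ℕ):ℝ) * Jm i c (φ x) / p c)
              = p c * (marg n (Fc c) i x * Real.log ((n:ℝ) * marg n (Fc c) i x))
                + (p c * Real.log (((n:ℝ)+1)/n)) * marg n (Fc c) i x := by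
            intro x
            have hmx0 : 0 ≤ marg n (Fc c) i x := by
              unfold marg
              apply Finset.sum_nonneg
              intro τ _
              split_ifs
              · exact hFc0 c τ
              · exact le_refl 0
            rcases eq_or_ne (marg n (Fc c) i x) 0 with h2 | h2
            · rw [hJφ x, h2]
              simp
            · have hmxp : 0 < marg n (Fc c) i x := lt_of_le_of_ne hmx0 (Ne.symm h2)
              rw [hJφ x]
              have harg : (((n+1):ℕ):ℝ) * (p c * marg n (Fc c) i x) / p c
                  = ((n:ℝ) * marg n (Fc c) i x) * (((n:ℝ)+1)/n) := by
                push_cast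
                field_simp
              rw [harg, Real.log_mul (by positivity) (by positivity)]
              ring
          symm
          calc ∑ k, Jm i c k * Real.log ((((n+1):ℕ):ℝ) * Jm i c k / p c)
              = ∑ k ∈ Finset.univ.erase c,
                  Jm i c k * Real.log ((((n+1):ℕ):ℝ) * Jm i c k / p c) := by
                rw [Finset.sum_erase _ (by rw [hJcc i c]; simp)]
            _ = ∑ x, Jm i c (φ x) * Real.log ((((n+1):ℕ):ℝ) * Jm i c (φ x) / p c) := by
                rw [← himg, Finset.sum_image (fun x _ y _ hxy => hφinj hxy)]
            _ = ∑ x, (p c * (marg n (Fc c) i x * Real.log ((n:ℝ) * marg n (Fc c) i x))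
                + (p c * Real.log (((n:ℝ)+1)/n)) * marg n (Fc c) i x) := by
                exact Finset.sum_congr rfl (fun x _ => hperx x)
            _ = p c * Dv n (marg n (Fc c) i) + p c * Real.log (((n:ℝ)+1)/n) := by
                rw [Finset.sum_add_distrib, ← Finset.mul_sum, ← Finset.mul_sum,
                  hmargsum1 c i, mul_one]
                rfl
      -- total marginal over positions
      have hmargtot : ∀ k, ∑ j, marg (n+1) F j k = 1 := by
        intro k
        unfold marg
        rw [Finset.sum_comm]
        rw [← h1]
        apply Finset.sum_congr rfl
        intro σ _
        have hcond : ∀ j : Fin (n+1), (if σ j = k then F σ else 0)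
            = if j = σ.symm k then F σ else 0 := by
          intro j
          refine if_congr ?_ rfl rfl
          exact Equiv.apply_eq_iff_eq_symm_apply σ
        rw [Finset.sum_congr rfl (fun j _ => hcond j)]
        rw [Finset.sum_ite_eq' Finset.univ (σ.symm k) (fun _ => F σ)]
        simp
      have hsuccm : ∀ k, ∑ i : Fin n, marg (n+1) F i.succ k = 1 - p k := by
        intro k
        have := hmargtot k
        rw [Fin.sum_univ_succ, hpm] at this
        linarith
      -- per-i inequality
      have hPi : ∀ i : Fin n, Dv (n+1) (marg (n+1) F i.succ)
          ≤ ∑ c, p c * Dv n (marg n (Fc c) i) + Real.log (((n:ℝ)+1)/n)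
            + ∑ k, marg (n+1) F i.succ k * Real.log (1 - p k) := by
        intro i
        have hcore : ∀ k, marg (n+1) F i.succ k
              * Real.log ((((n+1):ℕ):ℝ) * marg (n+1) F i.succ k)
            ≤ (∑ c, Jm i c k * Real.log ((((n+1):ℕ):ℝ) * Jm i c k / p c))
              + marg (n+1) F i.succ k * Real.log (1 - p k) := by
          intro k
          have hm : marg (n+1) F i.succ k = ∑ c, Jm i c k := hmarg_succ i k
          have hgib := gibbs_excl p (fun c => Jm i c k) k hp0 hps
            (fun c => hJ0 i c k) (fun c => hJle i c k) (hJcc i k)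
          have hsplit : ∀ c, Jm i c k * Real.log ((((n+1):ℕ):ℝ) * Jm i c k / p c)
              = Jm i c k * Real.log (Jm i c k / (p c * (∑ c', Jm i c' k)))
                + Jm i c k * Real.log ((((n+1):ℕ):ℝ) * (∑ c', Jm i c' k)) := by
            intro c
            rcases eq_or_ne (Jm i c k) 0 with h2 | h2
            · rw [h2]
              simp
            · have hJp : 0 < Jm i c k := lt_of_le_of_ne (hJ0 i c k) (Ne.symm h2)
              have hpcp : 0 < p c := lt_of_lt_of_le hJp (hJle i c k)
              have hMp : 0 < ∑ c', Jm i c' k :=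
                lt_of_lt_of_le hJp (Finset.single_le_sum
                  (fun c' _ => hJ0 i c' k) (Finset.mem_univ c))
              have hNc : (0:ℝ) < (((n+1):ℕ):ℝ) := by positivity
              have harg : (((n+1):ℕ):ℝ) * Jm i c k / p c
                  = (Jm i c k / (p c * (∑ c', Jm i c' k)))
                    * ((((n+1):ℕ):ℝ) * (∑ c', Jm i c' k)) := by
                field_simp
              rw [harg, Real.log_mul (div_pos hJp (mul_pos hpcp hMp)).ne'
                (mul_pos hNc hMp).ne']
              ring
          have hsum2 : ∑ c, Jm i c k * Real.log ((((n+1):ℕ):ℝ) * Jm i c k / p c)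
              = (∑ c, Jm i c k * Real.log (Jm i c k / (p c * (∑ c', Jm i c' k))))
                + (∑ c', Jm i c' k) * Real.log ((((n+1):ℕ):ℝ) * (∑ c', Jm i c' k)) := by
            rw [Finset.sum_congr rfl (fun c _ => hsplit c), Finset.sum_add_distrib]
            congr 1
            rw [← Finset.sum_mul]
          rw [hm]
          linarith [hgib, hsum2.ge, hsum2.le]
        have hDvle := Finset.sum_le_sum (fun k (_ : k ∈ Finset.univ) => hcore k)
        have hDvle2 : Dv (n+1) (marg (n+1) F i.succ)
            ≤ ∑ k, (∑ c, Jm i c k * Real.log ((((n+1):ℕ):ℝ) * Jm i c k / p c))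
              + ∑ k, marg (n+1) F i.succ k * Real.log (1 - p k) := by
          unfold Dv
          rw [← Finset.sum_add_distrib]
          exact hDvle
        have hswap : ∑ k, (∑ c, Jm i c k * Real.log ((((n+1):ℕ):ℝ) * Jm i c k / p c))
            = ∑ c, p c * Dv n (marg n (Fc c) i) + Real.log (((n:ℝ)+1)/n) := by
          rw [Finset.sum_comm]
          rw [Finset.sum_congr rfl (fun c _ => (haid i c).symm)]
          rw [Finset.sum_add_distrib, ← Finset.sum_mul, hps, one_mul]
        linarith [hDvle2, hswap.le, hswap.ge]
      -- assemble
      have hIH : ∀ c, ∑ i : Fin n, Dv n (marg n (Fc c) i) ≤ 2 * DP n (Fc c) :=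
        fun c => IH (Fc c) (hFc0 c) (hFcs c)
      have hsum_i := Finset.sum_le_sum (fun i (_ : i ∈ Finset.univ) => hPi i)
      have hstep2 : ∑ i : Fin n, Dv (n+1) (marg (n+1) F i.succ)
          ≤ ∑ c, p c * (2 * DP n (Fc c)) + (n:ℝ) * Real.log (((n:ℝ)+1)/n)
            + ∑ k, (1 - p k) * Real.log (1 - p k) := by
        have e1 : ∑ i : Fin n, (∑ c, p c * Dv n (marg n (Fc c) i)
              + Real.log (((n:ℝ)+1)/n)
              + ∑ k, marg (n+1) F i.succ k * Real.log (1 - p k))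
            = (∑ c, p c * (∑ i : Fin n, Dv n (marg n (Fc c) i)))
              + (n:ℝ) * Real.log (((n:ℝ)+1)/n)
              + ∑ k, (1 - p k) * Real.log (1 - p k) := by
          rw [Finset.sum_add_distrib, Finset.sum_add_distrib]
          congr 1
          · congr 1
            · rw [Finset.sum_comm]
              apply Finset.sum_congr rfl
              intro c _
              rw [Finset.mul_sum]
            · rw [Finset.sum_const, Finset.card_univ, Fintype.card_fin, nsmul_eq_mul]
          · rw [Finset.sum_comm]
            apply Finset.sum_congr rfl
            intro k _
            rw [← Finset.sum_mul, hsuccm k]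
        have e2 : ∑ c, p c * (∑ i : Fin n, Dv n (marg n (Fc c) i))
            ≤ ∑ c, p c * (2 * DP n (Fc c)) :=
          Finset.sum_le_sum (fun c _ => mul_le_mul_of_nonneg_left (hIH c) (hp0 c))
        calc ∑ i : Fin n, Dv (n+1) (marg (n+1) F i.succ)
            ≤ ∑ i : Fin n, (∑ c, p c * Dv n (marg n (Fc c) i)
                + Real.log (((n:ℝ)+1)/n)
                + ∑ k, marg (n+1) F i.succ k * Real.log (1 - p k)) := hsum_i
          _ = (∑ c, p c * (∑ i : Fin n, Dv n (marg n (Fc c) i)))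
                + (n:ℝ) * Real.log (((n:ℝ)+1)/n)
                + ∑ k, (1 - p k) * Real.log (1 - p k) := e1
          _ ≤ ∑ c, p c * (2 * DP n (Fc c)) + (n:ℝ) * Real.log (((n:ℝ)+1)/n)
                + ∑ k, (1 - p k) * Real.log (1 - p k) := by linarith [e2]
      have hbr := bracket n hn1 p hp0 hps
      have hfin : ∑ c, p c * (2 * DP n (Fc c)) = 2 * (DP (n+1) F - Dv (n+1) p) := by
        rw [hchain]
        rw [show ∑ c, p c * (2 * DP n (Fc c)) = 2 * ∑ c, p c * DP n (Fc c) by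
          rw [Finset.mul_sum]; exact Finset.sum_congr rfl (fun c _ => by ring)]
        ring
      rw [Fin.sum_univ_succ, hpm]
      have : Dv (n+1) (marg (n+1) F 0) = Dv (n+1) p := by rw [hpm]
      linarith [hstep2, hbr, hfin.le, hfin.ge]
lemma marg_nonneg {N : ℕ} (F : Equiv.Perm (Fin N) → ℝ) (h0 : ∀ σ, 0 ≤ F σ)
    (j k : Fin N) : 0 ≤ marg N F j k := by
  apply Finset.sum_nonneg
  intro σ _
  split_ifs
  · exact h0 σ
  · exact le_refl 0

lemma marg_sum_eq {N : ℕ} (F : Equiv.Perm (Fin N) → ℝ) (j : Fin N) :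
    ∑ k, marg N F j k = ∑ σ, F σ := by
  unfold marg
  rw [Finset.sum_comm]
  apply Finset.sum_congr rfl
  intro σ _
  rw [Finset.sum_ite_eq Finset.univ (σ j) (fun _ => F σ)]
  simp

lemma marg_group {N : ℕ} (F : Equiv.Perm (Fin N) → ℝ) (j : Fin N) (L : Fin N → ℝ) :
    ∑ k, marg N F j k * L k = ∑ σ, F σ * L (σ j) := by
  unfold marg
  have h1 : ∀ k, (∑ σ, if σ j = k then F σ else 0) * L k
      = ∑ σ, (if σ j = k then F σ * L (σ j) else 0) := by
    intro k
    rw [Finset.sum_mul]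
    apply Finset.sum_congr rfl
    intro σ _
    split_ifs with h
    · rw [h]
    · rw [zero_mul]
  rw [Finset.sum_congr rfl (fun k _ => h1 k), Finset.sum_comm]
  apply Finset.sum_congr rfl
  intro σ _
  rw [Finset.sum_ite_eq Finset.univ (σ j) (fun _ => F σ * L (σ j))]
  simp

/-- Gibbs variational bound: ∑ m log g ≤ Dv N m + log((∑ g)/N). -/
lemma gibbs_fin {N : ℕ} (m g : Fin N → ℝ) (hm0 : ∀ k, 0 ≤ m k) (hms : ∑ k, m k = 1)
    (hg0 : ∀ k, 0 ≤ g k) (himp : ∀ k, m k ≠ 0 → g k ≠ 0)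
    (hA : 0 < (∑ k, g k) / N) (hN : 0 < N) :
    ∑ k, m k * Real.log (g k) ≤ Dv N m + Real.log ((∑ k, g k) / N) := by
  have hNR : (0:ℝ) < (N:ℝ) := by exact_mod_cast hN
  set A := (∑ k, g k) / N with hAdef
  have hterm : ∀ k, m k * Real.log (g k) - m k * Real.log ((N:ℝ) * m k)
      - m k * Real.log A ≤ g k / ((N:ℝ) * A) - m k := by
    intro k
    rcases eq_or_ne (m k) 0 with h | h
    · rw [h]
      simp only [zero_mul, sub_zero, zero_sub, neg_zero, sub_zero]
      have : 0 ≤ g k / ((N:ℝ) * A) := div_nonneg (hg0 k) (by positivity)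
      linarith
    · have hmk : 0 < m k := lt_of_le_of_ne (hm0 k) (Ne.symm h)
      have hgk : 0 < g k := lt_of_le_of_ne (hg0 k) (Ne.symm (himp k h))
      have hw : (0:ℝ) < g k / ((N:ℝ) * A) := by positivity
      have hmain := mul_log_div_le (le_of_lt hw) (fun _ => ⟨hmk, hw⟩)
      have hlog : Real.log (g k / ((N:ℝ) * A) / m k)
          = Real.log (g k) - Real.log ((N:ℝ) * m k) - Real.log A := by
        rw [Real.log_div (by positivity) h, Real.log_div hgk.ne' (by positivity),
          Real.log_mul hNR.ne' (by positivity : (A:ℝ) ≠ 0),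
          Real.log_mul hNR.ne' h]
        ring
      rw [hlog] at hmain
      calc m k * Real.log (g k) - m k * Real.log ((N:ℝ) * m k) - m k * Real.log A
          = m k * (Real.log (g k) - Real.log ((N:ℝ) * m k) - Real.log A) := by ring
        _ ≤ g k / ((N:ℝ) * A) - m k := hmain
  have hsum := Finset.sum_le_sum (fun k (_ : k ∈ Finset.univ) => hterm k)
  have hleft : ∑ k, (m k * Real.log (g k) - m k * Real.log ((N:ℝ) * m k)
      - m k * Real.log A)
      = ∑ k, m k * Real.log (g k) - Dv N m - Real.log A := by
    rw [Finset.sum_sub_distrib, Finset.sum_sub_distrib, ← Finset.sum_mul, hms, one_mul]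
    rfl
  have hright : ∑ k, (g k / ((N:ℝ) * A) - m k) = 0 := by
    rw [Finset.sum_sub_distrib, hms]
    have : ∑ k, g k / ((N:ℝ) * A) = 1 := by
      rw [← Finset.sum_div]
      rw [div_eq_one_iff_eq (by positivity)]
      rw [hAdef]
      field_simp
    rw [this]
    ring
  rw [hleft, hright] at hsum
  linarith
lemma perm_sum_apply {n : ℕ} (j : Fin (n+1)) (h : Fin (n+1) → ℝ) :
    ∑ σ : Equiv.Perm (Fin (n+1)), h (σ j) = (n.factorial : ℝ) * ∑ k, h k := by
  have e1 : ∑ σ : Equiv.Perm (Fin (n+1)), h (σ j)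
      = ∑ σ : Equiv.Perm (Fin (n+1)), h (σ 0) := by
    have e2 := Equiv.sum_comp (Equiv.mulRight (Equiv.swap 0 j))
      (fun σ : Equiv.Perm (Fin (n+1)) => h (σ 0))
    rw [← e2]
    apply Finset.sum_congr rfl
    intro σ _
    simp only [Equiv.coe_mulRight, Equiv.Perm.mul_apply, Equiv.swap_apply_left]
  rw [e1, ← Equiv.sum_comp (Equiv.Perm.decomposeFin.symm)
    (fun σ : Equiv.Perm (Fin (n+1)) => h (σ 0)), Fintype.sum_prod_type]
  have e3 : ∀ c : Fin (n+1), ∀ τ : Equiv.Perm (Fin n),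
      h ((Equiv.Perm.decomposeFin.symm (c, τ)) 0) = h c := by
    intro c τ
    rw [Equiv.Perm.decomposeFin_symm_apply_zero]
  rw [Finset.sum_congr rfl (fun c _ => Finset.sum_congr rfl (fun τ _ => e3 c τ))]
  rw [Finset.mul_sum]
  apply Finset.sum_congr rfl
  intro c _
  rw [Finset.sum_const, Finset.card_univ, Fintype.card_perm, Fintype.card_fin,
    nsmul_eq_mul]

theorem sym_group_brascamp_lieb {N : ℕ} (f : Fin N → Fin N → ℝ)
    (hf : ∀ j k, 0 ≤ f j k) :
    (1 / (N.factorial : ℝ)) * ∑ σ : Equiv.Perm (Fin N), ∏ j, f j (σ j) ≤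
      ∏ j, Real.sqrt ((1 / (N.factorial : ℝ)) *
        ∑ σ : Equiv.Perm (Fin N), (f j (σ j)) ^ 2) := by
  cases N with
  | zero =>
    simp
  | succ n =>
    have hNfac : (0:ℝ) < ((n+1).factorial : ℝ) := by
      exact_mod_cast Nat.factorial_pos (n+1)
    have hnfac : (0:ℝ) < (n.factorial : ℝ) := by
      exact_mod_cast Nat.factorial_pos n
    set A : Fin (n+1) → ℝ := fun j => (∑ k, (f j k)^2) / (((n+1):ℕ):ℝ) with hA
    have hrw : ∀ j, (1 / (((n+1)).factorial : ℝ)) * ∑ σ : Equiv.Perm (Fin (n+1)),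
        (f j (σ j))^2 = A j := by
      intro j
      rw [perm_sum_apply j (fun k => (f j k)^2), hA]
      rw [Nat.factorial_succ]
      push_cast
      field_simp
    have hgoal2 : (∏ j, Real.sqrt ((1 / (((n+1)).factorial : ℝ)) *
        ∑ σ : Equiv.Perm (Fin (n+1)), (f j (σ j))^2)) = ∏ j, Real.sqrt (A j) :=
      Finset.prod_congr rfl (fun j _ => by rw [hrw j])
    rw [hgoal2]
    set Z := (1 / (((n+1)).factorial : ℝ)) * ∑ σ : Equiv.Perm (Fin (n+1)),
      ∏ j, f j (σ j) with hZ
    have hZ0 : 0 ≤ Z := by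
      apply mul_nonneg (by positivity)
      exact Finset.sum_nonneg (fun σ _ => Finset.prod_nonneg (fun j _ => hf j (σ j)))
    rcases eq_or_lt_of_le hZ0 with hz | hz
    · rw [← hz]
      exact Finset.prod_nonneg (fun j _ => Real.sqrt_nonneg _)
    · have hApos : ∀ j, 0 < A j := by
        intro j
        rcases lt_or_eq_of_le (show (0:ℝ) ≤ A j from by
          rw [hA]
          exact div_nonneg (Finset.sum_nonneg fun k _ => sq_nonneg _) (by positivity))
          with h | h
        · exact h
        · exfalso
          have hsum0 : ∑ k, (f j k)^2 = 0 := by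
            have := h.symm
            rw [hA] at this
            dsimp only at this
            field_simp at this
            simpa using this
          have hfz : ∀ k, f j k = 0 := by
            intro k
            have := (Finset.sum_eq_zero_iff_of_nonneg
              (fun k (_ : k ∈ Finset.univ) => sq_nonneg (f j k))).mp hsum0 k
              (Finset.mem_univ k)
            exact pow_eq_zero_iff two_ne_zero |>.mp this
          have hZz : Z = 0 := by
            rw [hZ]
            rw [Finset.sum_eq_zero (fun σ _ =>
              Finset.prod_eq_zero (Finset.mem_univ j) (hfz (σ j)))]
            ring
          rw [hZz] at hz
          exact lt_irrefl 0 hz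
      set F : Equiv.Perm (Fin (n+1)) → ℝ :=
        fun σ => (∏ j, f j (σ j)) / ((((n+1)).factorial : ℝ) * Z) with hF
      have hden : (0:ℝ) < (((n+1)).factorial : ℝ) * Z := by positivity
      have hF0 : ∀ σ, 0 ≤ F σ := fun σ =>
        div_nonneg (Finset.prod_nonneg (fun j _ => hf j (σ j))) hden.le
      have hNZ : (((n+1)).factorial : ℝ) * Z = ∑ σ : Equiv.Perm (Fin (n+1)),
          ∏ j, f j (σ j) := by
        rw [hZ]
        field_simp
      have hFs : ∑ σ, F σ = 1 := by
        rw [hF]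
        dsimp only
        rw [← Finset.sum_div, ← hNZ, div_self hden.ne']
      have hES := ent_sub (n+1) F hF0 hFs
      have hSj : ∀ j, ∑ σ, F σ * Real.log (f j (σ j))
          = ∑ k, marg (n+1) F j k * Real.log (f j k) :=
        fun j => (marg_group F j (fun k => Real.log (f j k))).symm
      have hDP : DP (n+1) F
          = (∑ j, ∑ k, marg (n+1) F j k * Real.log (f j k)) - Real.log Z := by
        unfold DP
        have hper : ∀ σ, F σ * Real.log ((((n+1)).factorial : ℝ) * F σ)
            = (∑ j, F σ * Real.log (f j (σ j))) - F σ * Real.log Z := by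
          intro σ
          rcases eq_or_ne (F σ) 0 with h | h
          · rw [h]
            simp
          · have hprod : (∏ j, f j (σ j)) ≠ 0 := by
              intro h2
              apply h
              rw [hF]
              dsimp only
              rw [h2, zero_div]
            have harg : (((n+1)).factorial : ℝ) * F σ = (∏ j, f j (σ j)) / Z := by
              rw [hF]
              dsimp only
              field_simp
            rw [harg, Real.log_div hprod hz.ne',
              Real.log_prod (fun j _ hj =>
                hprod (Finset.prod_eq_zero (Finset.mem_univ j) hj))]
            rw [mul_sub, Finset.mul_sum]
        rw [Finset.sum_congr rfl (fun σ _ => hper σ), Finset.sum_sub_distrib,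
          ← Finset.sum_mul, hFs, one_mul, Finset.sum_comm]
        congr 1
        exact Finset.sum_congr rfl (fun j _ => hSj j)
      have hmargs : ∀ j, ∑ k, marg (n+1) F j k = 1 := by
        intro j
        rw [marg_sum_eq, hFs]
      have hgb : ∀ j, 2 * (∑ k, marg (n+1) F j k * Real.log (f j k))
          ≤ Dv (n+1) (marg (n+1) F j) + Real.log (A j) := by
        intro j
        have himp : ∀ k, marg (n+1) F j k ≠ 0 → (f j k)^2 ≠ 0 := by
          intro k hm hfk
          apply hm
          have hfk0 : f j k = 0 := pow_eq_zero_iff two_ne_zero |>.mp hfk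
          unfold marg
          apply Finset.sum_eq_zero
          intro σ _
          split_ifs with hcond
          · rw [hF]
            dsimp only
            rw [Finset.prod_eq_zero (Finset.mem_univ j) (by rw [hcond, hfk0]), zero_div]
          · rfl
        have hApos' : 0 < (∑ k, (f j k)^2) / (((n+1):ℕ):ℝ) := hApos j
        have hgf := gibbs_fin (marg (n+1) F j) (fun k => (f j k)^2)
          (marg_nonneg F hF0 j) (hmargs j) (fun k => sq_nonneg _) himp
          (by exact_mod_cast hApos') (Nat.succ_pos n)
        have h2 : ∑ k, marg (n+1) F j k * Real.log ((f j k)^2)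
            = 2 * ∑ k, marg (n+1) F j k * Real.log (f j k) := by
          rw [Finset.mul_sum]
          apply Finset.sum_congr rfl
          intro k _
          rw [Real.log_pow]
          push_cast
          ring
        rw [h2] at hgf
        have hAeq : ((∑ k, (f j k)^2) / ((n+1 : ℕ):ℝ) : ℝ) = A j := rfl
        calc 2 * (∑ k, marg (n+1) F j k * Real.log (f j k))
            ≤ Dv (n+1) (marg (n+1) F j)
              + Real.log ((∑ k, (f j k)^2) / ((n+1 : ℕ):ℝ)) := by
              exact_mod_cast hgf
          _ = Dv (n+1) (marg (n+1) F j) + Real.log (A j) := by rw [hAeq]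
      have hsum_gb := Finset.sum_le_sum (fun j (_ : j ∈ Finset.univ) => hgb j)
      have hsplit2 : ∑ j, (2 * (∑ k, marg (n+1) F j k * Real.log (f j k)))
          = 2 * (DP (n+1) F + Real.log Z) := by
        rw [← Finset.mul_sum]
        rw [show (∑ j, ∑ k, marg (n+1) F j k * Real.log (f j k))
          = DP (n+1) F + Real.log Z from by rw [hDP]; ring]
      have hsplit3 : ∑ j, (Dv (n+1) (marg (n+1) F j) + Real.log (A j))
          = (∑ j, Dv (n+1) (marg (n+1) F j)) + ∑ j, Real.log (A j) :=
        Finset.sum_add_distrib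
      have hlogZ : 2 * Real.log Z ≤ ∑ j, Real.log (A j) := by
        rw [hsplit2, hsplit3] at hsum_gb
        linarith [hES]
      have hprodA : (0:ℝ) < ∏ j, A j :=
        Finset.prod_pos (fun j _ => hApos j)
      have hle : Z^2 ≤ ∏ j, A j := by
        have h2 : Real.log (Z^2) ≤ Real.log (∏ j, A j) := by
          rw [Real.log_pow, Real.log_prod (fun j _ => (hApos j).ne')]
          push_cast
          linarith [hlogZ]
        exact (Real.log_le_log_iff (by positivity) hprodA).mp h2
      have hsq : (∏ j, Real.sqrt (A j))^2 = ∏ j, A j := by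
        rw [← Finset.prod_pow]
        exact Finset.prod_congr rfl (fun j _ => Real.sq_sqrt (hApos j).le)
      exact le_of_pow_le_pow_left₀ two_ne_zero
        (Finset.prod_nonneg (fun j _ => Real.sqrt_nonneg _))
        (by rw [hsq]; exact hle)
end

section
/- For any two vectors f_1, f_2 in ℂ^N, ∑_{1≤i<j≤N} |f_{1,i} f_{2,j} + f_{1,j} f_{2,i}|² ≤ 2·((N−1)/N)·|f_1|²·|f_2|², where |f| denotes the Euclidean norm. -/
open scoped BigOperators

/-- Euclidean norm of a vector in `ℂ^N`. -/
noncomputable def enorm' {N : ℕ} (f : Fin N → ℂ) : ℝ :=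
  Real.sqrt (∑ i, ‖f i‖ ^ 2)

lemma enorm_sq' {N : ℕ} (f : Fin N → ℂ) :
    enorm' f ^ 2 = ∑ i, ‖f i‖ ^ 2 := by
  rw [enorm', Real.sq_sqrt]
  exact Finset.sum_nonneg fun i _ => sq_nonneg _

lemma full_sum_eq {N : ℕ} (a b : Fin N → ℂ) :
    ∑ p : Fin N × Fin N, ‖a p.1 * b p.2 + a p.2 * b p.1‖ ^ 2
      = 2 * ((∑ i, ‖a i‖ ^ 2) * (∑ i, ‖b i‖ ^ 2))
        + 2 * ‖∑ i, a i * (starRingEnd ℂ) (b i)‖ ^ 2 := by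
  classical
  rw [Fintype.sum_prod_type]
  have hterm : ∀ i j : Fin N, ‖a i * b j + a j * b i‖ ^ 2
      = ‖a i‖ ^ 2 * ‖b j‖ ^ 2
        + ‖a j‖ ^ 2 * ‖b i‖ ^ 2
        + 2 * ((a i * (starRingEnd ℂ) (b i)) * ((starRingEnd ℂ) (a j) * b j)).re := by
    intro i j
    rw [Complex.sq_norm, Complex.normSq_add, Complex.normSq_mul, Complex.normSq_mul,
      Complex.normSq_eq_norm_sq, Complex.normSq_eq_norm_sq, Complex.normSq_eq_norm_sq,
      Complex.normSq_eq_norm_sq]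
    have : a i * b j * (starRingEnd ℂ) (a j * b i)
        = a i * (starRingEnd ℂ) (b i) * ((starRingEnd ℂ) (a j) * b j) := by
      rw [map_mul]; ring
    rw [this]
  simp only [hterm]
  set S : ℂ := ∑ i, a i * (starRingEnd ℂ) (b i) with hSdef
  have h1 : ∑ i : Fin N, ∑ j : Fin N, ‖a i‖ ^ 2 * ‖b j‖ ^ 2
      = (∑ i, ‖a i‖ ^ 2) * (∑ i, ‖b i‖ ^ 2) := by
    rw [Finset.sum_mul_sum]
  have h2 : ∑ i : Fin N, ∑ j : Fin N, ‖a j‖ ^ 2 * ‖b i‖ ^ 2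
      = (∑ i, ‖a i‖ ^ 2) * (∑ i, ‖b i‖ ^ 2) := by
    rw [Finset.sum_comm, Finset.sum_mul_sum]
  have h3 : ∑ i : Fin N, ∑ j : Fin N,
      2 * ((a i * (starRingEnd ℂ) (b i)) * ((starRingEnd ℂ) (a j) * b j)).re
      = 2 * ‖S‖ ^ 2 := by
    have hS2 : (starRingEnd ℂ) S = ∑ j, (starRingEnd ℂ) (a j) * b j := by
      rw [hSdef, map_sum]
      exact Finset.sum_congr rfl fun j _ => by rw [map_mul, Complex.conj_conj]
    have habs : ‖S‖ ^ 2 = (S * (starRingEnd ℂ) S).re := by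
      rw [Complex.sq_norm, Complex.mul_conj, Complex.ofReal_re]
    rw [habs, hSdef, hS2, Finset.sum_mul_sum, Complex.re_sum, Finset.mul_sum]
    refine Finset.sum_congr rfl fun i _ => ?_
    rw [Complex.re_sum, Finset.mul_sum]
  calc ∑ i : Fin N, ∑ j : Fin N, (‖a i‖ ^ 2 * ‖b j‖ ^ 2
        + ‖a j‖ ^ 2 * ‖b i‖ ^ 2
        + 2 * ((a i * (starRingEnd ℂ) (b i)) * ((starRingEnd ℂ) (a j) * b j)).re)
      = (∑ i : Fin N, ∑ j : Fin N, ‖a i‖ ^ 2 * ‖b j‖ ^ 2)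
        + (∑ i : Fin N, ∑ j : Fin N, ‖a j‖ ^ 2 * ‖b i‖ ^ 2)
        + ∑ i : Fin N, ∑ j : Fin N,
          2 * ((a i * (starRingEnd ℂ) (b i)) * ((starRingEnd ℂ) (a j) * b j)).re := by
        simp [Finset.sum_add_distrib]
    _ = 2 * ((∑ i, ‖a i‖ ^ 2) * (∑ i, ‖b i‖ ^ 2))
        + 2 * ‖S‖ ^ 2 := by rw [h1, h2, h3]; ring

lemma key_identity {N : ℕ} (a b : Fin N → ℂ) :
    ∑ p ∈ Finset.univ.filter (fun p : Fin N × Fin N => p.1 < p.2),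
        ‖a p.1 * b p.2 + a p.2 * b p.1‖ ^ 2
      = (∑ i, ‖a i‖ ^ 2) * (∑ i, ‖b i‖ ^ 2)
        + ‖∑ i, a i * (starRingEnd ℂ) (b i)‖ ^ 2
        - 2 * ∑ i, ‖a i‖ ^ 2 * ‖b i‖ ^ 2 := by
  classical
  set g : Fin N × Fin N → ℝ :=
    fun p => ‖a p.1 * b p.2 + a p.2 * b p.1‖ ^ 2 with hg
  have hsymm : ∀ i j : Fin N, g (i, j) = g (j, i) := by
    intro i j
    simp only [hg]
    rw [add_comm]
  have hswap : ∑ p ∈ Finset.univ.filter (fun p : Fin N × Fin N => p.1 < p.2), g p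
      = ∑ p ∈ Finset.univ.filter (fun p : Fin N × Fin N => p.2 < p.1), g p := by
    refine Finset.sum_nbij' (fun p => Prod.swap p) (fun p => Prod.swap p) ?_ ?_ ?_ ?_ ?_
    · intro p hp; simp only [Finset.mem_filter, Finset.mem_univ, true_and] at hp ⊢
      exact hp
    · intro p hp; simp only [Finset.mem_filter, Finset.mem_univ, true_and] at hp ⊢
      exact hp
    · intro p _; simp
    · intro p _; simp
    · intro p _; exact hsymm p.1 p.2
  have hdiagfilter : ∑ p ∈ Finset.univ.filter (fun p : Fin N × Fin N => p.1 = p.2), g p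
      = ∑ i : Fin N, g (i, i) := by
    refine Finset.sum_nbij' (fun p => p.1) (fun i => (i, i)) ?_ ?_ ?_ ?_ ?_
    · intro p hp; simp
    · intro i _; simp
    · intro p hp
      simp only [Finset.mem_filter, Finset.mem_univ, true_and] at hp
      exact Prod.ext rfl hp
    · intro i _; rfl
    · intro p hp
      simp only [Finset.mem_filter, Finset.mem_univ, true_and] at hp
      have hpp : p = (p.1, p.1) := Prod.ext rfl hp.symm
      rw [← hpp]
  have hdiag : ∑ i : Fin N, g (i, i)
      = 4 * ∑ i, ‖a i‖ ^ 2 * ‖b i‖ ^ 2 := by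
    rw [Finset.mul_sum]
    refine Finset.sum_congr rfl fun i _ => ?_
    simp only [hg]
    rw [show a i * b i + a i * b i = 2 * (a i * b i) by ring, norm_mul, norm_mul,
      Complex.norm_two]
    ring
  have hsplit := Finset.sum_filter_add_sum_filter_not (Finset.univ : Finset (Fin N × Fin N))
    (fun p => p.1 < p.2) g
  have hsplit2 : ∑ p ∈ Finset.univ.filter (fun p : Fin N × Fin N => ¬ p.1 < p.2), g p
      = ∑ p ∈ Finset.univ.filter (fun p : Fin N × Fin N => p.2 < p.1), g p
        + ∑ p ∈ Finset.univ.filter (fun p : Fin N × Fin N => p.1 = p.2), g p := by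
    rw [← Finset.sum_filter_add_sum_filter_not
      (Finset.univ.filter (fun p : Fin N × Fin N => ¬ p.1 < p.2)) (fun p => p.2 < p.1) g]
    congr 1
    · congr 1
      rw [Finset.filter_filter]
      apply Finset.filter_congr
      intro p _
      constructor
      · rintro ⟨_, h⟩; exact h
      · intro h; exact ⟨not_lt.2 h.le, h⟩
    · congr 1
      rw [Finset.filter_filter]
      apply Finset.filter_congr
      intro p _
      constructor
      · rintro ⟨h1, h2⟩; exact le_antisymm (not_lt.1 h2) (not_lt.1 h1)
      · intro h
        constructor
        · rw [h]; exact lt_irrefl _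
        · rw [h]; exact lt_irrefl _
  have hfull := full_sum_eq a b
  rw [hsplit2, ← hswap, hdiagfilter, hdiag] at hsplit
  have hfull' : ∑ p : Fin N × Fin N, g p
      = 2 * ((∑ i, ‖a i‖ ^ 2) * (∑ i, ‖b i‖ ^ 2))
        + 2 * ‖∑ i, a i * (starRingEnd ℂ) (b i)‖ ^ 2 := hfull
  rw [hfull'] at hsplit
  linarith

set_option maxHeartbeats 1000000 in
theorem two_by_two_permanent_sum_bound {N : ℕ} (f₁ f₂ : Fin N → ℂ) :
    ∑ p ∈ Finset.univ.filter (fun p : Fin N × Fin N => p.1 < p.2),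
        ‖f₁ p.1 * f₂ p.2 + f₁ p.2 * f₂ p.1‖ ^ 2 ≤
      2 * (((N : ℝ) - 1) / N) * enorm' f₁ ^ 2 * enorm' f₂ ^ 2 := by
  classical
  rcases Nat.lt_or_ge N 2 with hN | hN
  · obtain rfl | rfl : N = 0 ∨ N = 1 := by omega
    · have h0 : (Finset.univ.filter (fun p : Fin 0 × Fin 0 => p.1 < p.2)) = ∅ := by decide
      rw [h0, Finset.sum_empty]
      norm_num
    · have h0 : (Finset.univ.filter (fun p : Fin 1 × Fin 1 => p.1 < p.2)) = ∅ := by decide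
      rw [h0, Finset.sum_empty]
      norm_num
  have hA := enorm_sq' f₁
  have hB := enorm_sq' f₂
  rw [key_identity f₁ f₂, hA, hB]
  set A : ℝ := ∑ i, ‖f₁ i‖ ^ 2 with hAdef
  set B : ℝ := ∑ i, ‖f₂ i‖ ^ 2 with hBdef
  set S : ℂ := ∑ i, f₁ i * (starRingEnd ℂ) (f₂ i) with hSdef
  set T : ℝ := ∑ i, ‖f₁ i‖ ^ 2 * ‖f₂ i‖ ^ 2 with hTdef
  set P : ℝ := (∑ i, ‖f₁ i‖ * ‖f₂ i‖) ^ 2 with hPdef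
  have hS_le : ‖S‖ ^ 2 ≤ P := by
    have h1 : ‖S‖ ≤ ∑ i, ‖f₁ i‖ * ‖f₂ i‖ := by
      rw [hSdef]
      refine le_trans (norm_sum_le _ _) ?_
      refine Finset.sum_le_sum fun i _ => ?_
      rw [norm_mul, Complex.norm_conj]
    have h2 : (0:ℝ) ≤ ‖S‖ := norm_nonneg _
    rw [hPdef]
    exact pow_le_pow_left₀ h2 h1 2
  have hP_le_AB : P ≤ A * B := by
    rw [hPdef, hAdef, hBdef]
    exact Finset.sum_mul_sq_le_sq_mul_sq _ _ _
  have hP_le_NT : P ≤ (N : ℝ) * T := by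
    rw [hPdef, hTdef]
    have h := Finset.sum_mul_sq_le_sq_mul_sq Finset.univ (fun _ : Fin N => (1:ℝ))
      (fun i => ‖f₁ i‖ * ‖f₂ i‖)
    simp only [one_mul, one_pow, mul_one, Finset.sum_const, Finset.card_univ,
      Fintype.card_fin, nsmul_eq_mul] at h
    refine le_trans h ?_
    apply mul_le_mul_of_nonneg_left _ (Nat.cast_nonneg N)
    refine le_of_eq (Finset.sum_congr rfl fun i _ => ?_)
    ring
  have hA0 : (0:ℝ) ≤ A := by
    rw [hAdef]; exact Finset.sum_nonneg fun i _ => sq_nonneg _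
  have hB0 : (0:ℝ) ≤ B := by
    rw [hBdef]; exact Finset.sum_nonneg fun i _ => sq_nonneg _
  have hP0 : (0:ℝ) ≤ P := sq_nonneg _
  have hS0 : (0:ℝ) ≤ ‖S‖ ^ 2 := sq_nonneg _
  have hN2 : (2:ℝ) ≤ (N:ℝ) := by exact_mod_cast hN
  have hNpos : (0:ℝ) < N := by linarith
  rw [show 2 * (((N : ℝ) - 1) / N) * A * B = (2 * ((N:ℝ) - 1) * A * B) / N by ring]
  rw [le_div_iff₀ hNpos]
  nlinarith [mul_nonneg (sub_nonneg.2 hN2) (sub_nonneg.2 hP_le_AB),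
    mul_nonneg (mul_nonneg hA0 hB0) (sub_nonneg.2 hN2)]
end

section
/- With C(p) = sup over nonzero f_1,…,f_N ∈ ℂ^N of |perm[f_1,…,f_N]| / ∏_j |f_j|_p, for all 1 ≤ p ≤ 2 one has C(p) ≤ (N!/N^{N/2})^{2−2/p}. -/
open scoped BigOperators

/-- The `ℓ^p` norm of a vector in `ℂ^N`. -/
noncomputable def lpnorm {N : ℕ} (p : ℝ) (f : Fin N → ℂ) : ℝ :=
  (∑ k, ‖f k‖ ^ p) ^ (1 / p)

/-- `C(p)`: the best constant in `|perm F| ≤ C(p) ∏_j |f_j|_p`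
over nonzero columns `f_j`. -/
noncomputable def Cp (N : ℕ) (p : ℝ) : ℝ :=
  sSup {r : ℝ | ∃ f : Fin N → Fin N → ℂ, (∀ j, f j ≠ 0) ∧
    r = ‖perm (fun i j => f j i)‖ / ∏ j, lpnorm p (f j)}

namespace CpProof

open Finset

variable {N : ℕ}

/-- Real permanent, columns form: `c j` is the `j`-th column. -/
noncomputable def PerC (c : Fin N → Fin N → ℝ) : ℝ :=
  ∑ σ : Equiv.Perm (Fin N), ∏ j, c j (σ j)

def dotp (x y : Fin N → ℝ) : ℝ := ∑ i, x i * y i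

lemma dotp_comm (x y : Fin N → ℝ) : dotp x y = dotp y x :=
  Finset.sum_congr rfl fun i _ => mul_comm _ _

lemma dotp_nonneg {x y : Fin N → ℝ} (hx : ∀ i, 0 ≤ x i) (hy : ∀ i, 0 ≤ y i) :
    0 ≤ dotp x y :=
  Finset.sum_nonneg fun i _ => mul_nonneg (hx i) (hy i)

lemma dotp_self (x : Fin N → ℝ) : dotp x x = ∑ i, x i ^ 2 := by
  simp only [dotp, pow_two]

lemma perC_nonneg {c : Fin N → Fin N → ℝ} (hc : ∀ j i, 0 ≤ c j i) : 0 ≤ PerC c :=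
  Finset.sum_nonneg fun σ _ => Finset.prod_nonneg fun j _ => hc j (σ j)

lemma prod_split {j k : Fin N} (hjk : j ≠ k) (g : Fin N → ℝ) :
    ∏ m, g m = g j * (g k * ∏ m ∈ (univ.erase j).erase k, g m) := by
  rw [Finset.mul_prod_erase (univ.erase j) g
      (Finset.mem_erase.2 ⟨Ne.symm hjk, Finset.mem_univ k⟩),
    Finset.mul_prod_erase univ g (Finset.mem_univ j)]

def upd2 (A : Fin N → Fin N → ℝ) (j k : Fin N) (x y : Fin N → ℝ) :
    Fin N → Fin N → ℝ :=
  fun m => if m = j then x else if m = k then y else A m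

noncomputable def TT (A : Fin N → Fin N → ℝ) (j k : Fin N) (x y : Fin N → ℝ) : ℝ :=
  ∑ σ : Equiv.Perm (Fin N),
    x (σ j) * (y (σ k) * ∏ m ∈ (univ.erase j).erase k, A m (σ m))

lemma mem_EE {j k m : Fin N} (hm : m ∈ (univ.erase j).erase k) : m ≠ j ∧ m ≠ k :=
  ⟨(Finset.mem_erase.1 (Finset.mem_of_mem_erase hm)).1, (Finset.mem_erase.1 hm).1⟩

lemma perC_upd2 {A : Fin N → Fin N → ℝ} {j k : Fin N} (hjk : j ≠ k) (x y : Fin N → ℝ) :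
    PerC (upd2 A j k x y) = TT A j k x y := by
  unfold PerC TT
  refine Finset.sum_congr rfl fun σ _ => ?_
  rw [prod_split hjk]
  have h1 : upd2 A j k x y j = x := by simp [upd2]
  have h2 : upd2 A j k x y k = y := by simp [upd2, Ne.symm hjk]
  rw [h1, h2]
  congr 2
  exact Finset.prod_congr rfl fun m hm => by
    obtain ⟨hm1, hm2⟩ := mem_EE hm
    simp [upd2, hm1, hm2]

lemma upd2_self (A : Fin N → Fin N → ℝ) (j k : Fin N) : upd2 A j k (A j) (A k) = A := by
  funext m
  unfold upd2
  split_ifs with h1 h2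
  · rw [h1]
  · rw [h2]
  · rfl

lemma perC_eq_TT {A : Fin N → Fin N → ℝ} {j k : Fin N} (hjk : j ≠ k) :
    PerC A = TT A j k (A j) (A k) := by
  conv_lhs => rw [← upd2_self A j k]
  exact perC_upd2 hjk _ _

lemma TT_slots (A : Fin N → Fin N → ℝ) {j k : Fin N} (x y : Fin N → ℝ) :
    TT A j k x y = TT A k j y x := by
  unfold TT
  rw [Finset.erase_right_comm]
  exact Finset.sum_congr rfl fun σ _ => by ring

lemma TT_swap (A : Fin N → Fin N → ℝ) {j k : Fin N} (hjk : j ≠ k) (x y : Fin N → ℝ) :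
    TT A j k x y = TT A j k y x := by
  unfold TT
  rw [← Equiv.sum_comp (Equiv.mulRight (Equiv.swap j k))
      (fun σ : Equiv.Perm (Fin N) =>
        y (σ j) * (x (σ k) * ∏ m ∈ (univ.erase j).erase k, A m (σ m)))]
  refine Finset.sum_congr rfl fun σ _ => ?_
  have hj : (Equiv.mulRight (Equiv.swap j k) σ) j = σ k := by
    simp [Equiv.Perm.mul_apply]
  have hk : (Equiv.mulRight (Equiv.swap j k) σ) k = σ j := by
    simp [Equiv.Perm.mul_apply]
  rw [hj, hk]
  have hE : ∏ m ∈ (univ.erase j).erase k, A m ((Equiv.mulRight (Equiv.swap j k) σ) m)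
      = ∏ m ∈ (univ.erase j).erase k, A m (σ m) :=
    Finset.prod_congr rfl fun m hm => by
      obtain ⟨hm1, hm2⟩ := mem_EE hm
      simp [Equiv.Perm.mul_apply, Equiv.swap_apply_of_ne_of_ne hm1 hm2]
  rw [hE]
  ring

noncomputable def Wf (A : Fin N → Fin N → ℝ) (j k : Fin N) (y : Fin N → ℝ) : Fin N → ℝ :=
  fun i => ∑ σ ∈ univ.filter (fun σ : Equiv.Perm (Fin N) => σ j = i),
    y (σ k) * ∏ m ∈ (univ.erase j).erase k, A m (σ m)

lemma TT_eq_dot (A : Fin N → Fin N → ℝ) (j k : Fin N) (x y : Fin N → ℝ) :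
    TT A j k x y = dotp x (Wf A j k y) := by
  unfold TT dotp Wf
  rw [← Finset.sum_fiberwise univ (fun σ : Equiv.Perm (Fin N) => σ j)
      (fun σ => x (σ j) * (y (σ k) * ∏ m ∈ (univ.erase j).erase k, A m (σ m)))]
  refine Finset.sum_congr rfl fun i _ => ?_
  rw [Finset.mul_sum]
  refine Finset.sum_congr rfl fun σ hσ => ?_
  rw [(Finset.mem_filter.1 hσ).2]


lemma key_col (A : Fin N → Fin N → ℝ)
    (hA0 : ∀ m i, 0 ≤ A m i) (hA1 : ∀ m, ∑ i, A m i ^ 2 = 1)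
    (hmax : ∀ c : Fin N → Fin N → ℝ, (∀ m i, 0 ≤ c m i) → (∀ m, ∑ i, c m i ^ 2 = 1) →
      PerC c ≤ PerC A)
    (hMpos : 0 < PerC A) {j k : Fin N} (hjk : j ≠ k) :
    ∀ x : Fin N → ℝ, TT A j k x (A k) = PerC A * dotp x (A j) := by
  set M := PerC A with hM
  set w := Wf A j k (A k) with hw
  have hw0 : ∀ i, 0 ≤ w i := fun i =>
    Finset.sum_nonneg fun σ _ => mul_nonneg (hA0 k _)
      (Finset.prod_nonneg fun m _ => hA0 m _)
  have hTdot : ∀ x, TT A j k x (A k) = dotp x w := fun x => TT_eq_dot A j k x (A k)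
  have hMw : dotp (A j) w = M := by
    rw [← hTdot (A j), ← perC_eq_TT hjk]
  have hMw' : (∑ i, A j i * w i) = M := hMw
  have hq : M ^ 2 ≤ dotp w w := by
    have hcs := Finset.sum_mul_sq_le_sq_mul_sq univ (fun i => A j i) (fun i => w i)
    have h1 : (∑ i, A j i ^ 2) = 1 := hA1 j
    have h2 : (∑ i, w i ^ 2) = dotp w w := (dotp_self w).symm
    rw [h1, h2, one_mul] at hcs
    calc M ^ 2 = (∑ i, A j i * w i) ^ 2 := by rw [hMw']
      _ ≤ dotp w w := hcs
  have hqpos : 0 < dotp w w := lt_of_lt_of_le (pow_pos hMpos 2) hq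
  set nw := Real.sqrt (dotp w w) with hnw
  have hnwpos : 0 < nw := Real.sqrt_pos.2 hqpos
  have hMnw : M ≤ nw := (Real.le_sqrt hMpos.le hqpos.le).2 hq
  set xs : Fin N → ℝ := fun i => w i / nw with hxs
  have hxs0 : ∀ i, 0 ≤ xs i := fun i => div_nonneg (hw0 i) hnwpos.le
  have hww : (∑ i, w i * w i) = dotp w w := rfl
  have hxs1 : ∑ i, xs i ^ 2 = 1 := by
    simp only [hxs, div_pow]
    rw [← Finset.sum_div]
    have h2 : (∑ i, w i ^ 2) = dotp w w := (dotp_self w).symm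
    rw [h2, Real.sq_sqrt hqpos.le]
    exact div_self (ne_of_gt hqpos)
  have hupK : PerC (upd2 A j k xs (A k)) ≤ M := by
    apply hmax
    · intro m i
      unfold upd2
      split_ifs
      · exact hxs0 i
      · exact hA0 k i
      · exact hA0 m i
    · intro m
      unfold upd2
      split_ifs
      · exact hxs1
      · exact hA1 k
      · exact hA1 m
  have hdxsw : dotp xs w = nw := by
    unfold dotp
    have : ∀ i, xs i * w i = (w i * w i) / nw := by
      intro i; simp only [hxs]; ring
    rw [Finset.sum_congr rfl fun i _ => this i, ← Finset.sum_div, hww, hnw,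
      Real.div_sqrt]
  have hnwM : nw ≤ M := by
    have h1 : PerC (upd2 A j k xs (A k)) = dotp xs w := by
      rw [perC_upd2 hjk, hTdot]
    rw [h1, hdxsw] at hupK
    exact hupK
  have hnweq : nw = M := le_antisymm hnwM hMnw
  have hqM : dotp w w = M ^ 2 := by
    rw [← Real.sq_sqrt hqpos.le, ← hnw, hnweq]
  have hwi : ∀ i, w i = M * A j i := by
    have hsum : ∑ i, (A j i - w i / M) ^ 2 = 0 := by
      have expand : ∀ i, (A j i - w i / M) ^ 2
          = A j i ^ 2 - (2 / M) * (A j i * w i) + (w i * w i) / M ^ 2 := by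
        intro i; field_simp; ring
      rw [Finset.sum_congr rfl fun i _ => expand i]
      rw [Finset.sum_add_distrib, Finset.sum_sub_distrib, ← Finset.mul_sum,
        ← Finset.sum_div, hA1 j, hMw', hww, hqM]
      field_simp
      norm_num
    intro i
    have h0 := (Finset.sum_eq_zero_iff_of_nonneg (fun i _ => sq_nonneg _)).1 hsum i
      (Finset.mem_univ i)
    have h1 : A j i - w i / M = 0 := by
      exact pow_eq_zero_iff (two_ne_zero) |>.1 h0
    have h2 : A j i = w i / M := by linarith
    rw [h2]
    field_simp
  intro x
  rw [hTdot x]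
  unfold dotp
  rw [Finset.mul_sum]
  exact Finset.sum_congr rfl fun i _ => by rw [hwi i]; ring


noncomputable def Gf (c : Fin N → Fin N → ℝ) : ℝ := ∑ i, (∑ m, c m i) ^ 2

lemma continuous_perC : Continuous (PerC (N := N)) :=
  continuous_finset_sum _ fun σ _ =>
    continuous_finset_prod _ fun j _ =>
      (continuous_apply (σ j)).comp (continuous_apply j)

lemma continuous_Gf : Continuous (Gf (N := N)) :=
  continuous_finset_sum _ fun i _ =>
    (continuous_finset_sum _ fun m _ => (continuous_apply i).comp (continuous_apply m)).pow 2

lemma isCompact_K :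
    IsCompact {c : Fin N → Fin N → ℝ |
      (∀ m i, 0 ≤ c m i) ∧ ∀ m, ∑ i, c m i ^ 2 = 1} := by
  refine IsCompact.of_isClosed_subset
    (isCompact_univ_pi fun _ : Fin N =>
      isCompact_univ_pi fun _ : Fin N => isCompact_Icc (a := (0:ℝ)) (b := 1))
    ?_ ?_
  · have hset : {c : Fin N → Fin N → ℝ | (∀ m i, 0 ≤ c m i) ∧ ∀ m, ∑ i, c m i ^ 2 = 1}
        = (⋂ m, ⋂ i, {c : Fin N → Fin N → ℝ | 0 ≤ c m i})
          ∩ ⋂ m, {c : Fin N → Fin N → ℝ | ∑ i, c m i ^ 2 = 1} := by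
      ext c
      simp only [Set.mem_setOf_eq, Set.mem_inter_iff, Set.mem_iInter]
    rw [hset]
    refine IsClosed.inter ?_ ?_
    · exact isClosed_iInter fun m => isClosed_iInter fun i =>
        isClosed_le continuous_const ((continuous_apply i).comp (continuous_apply m))
    · exact isClosed_iInter fun m => isClosed_eq
        (continuous_finset_sum _ fun i _ =>
          ((continuous_apply i).comp (continuous_apply m)).pow 2)
        continuous_const
  · intro c hc
    rw [Set.mem_univ_pi]
    intro m
    rw [Set.mem_univ_pi]
    intro i
    refine ⟨hc.1 m i, ?_⟩
    have h2 : c m i ^ 2 ≤ 1 := by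
      have hle := Finset.single_le_sum (f := fun i => c m i ^ 2)
        (fun i _ => sq_nonneg _) (Finset.mem_univ i)
      rw [hc.2 m] at hle
      exact hle
    nlinarith [hc.1 m i]


set_option maxHeartbeats 1000000 in
lemma perC_le_on_K (hN : 0 < N) (c : Fin N → Fin N → ℝ)
    (hc0 : ∀ m i, 0 ≤ c m i) (hc1 : ∀ m, ∑ i, c m i ^ 2 = 1) :
    PerC c ≤ (N.factorial : ℝ) / (N : ℝ) ^ ((N : ℝ) / 2) := by
  classical
  set K : Set (Fin N → Fin N → ℝ) :=
    {c | (∀ m i, 0 ≤ c m i) ∧ ∀ m, ∑ i, c m i ^ 2 = 1} with hK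
  have hNR : (0:ℝ) < N := Nat.cast_pos.2 hN
  -- the uniform matrix
  set u0 : Fin N → Fin N → ℝ := fun _ _ => (Real.sqrt N)⁻¹ with hu0
  have hsqrtN : (0:ℝ) < Real.sqrt N := Real.sqrt_pos.2 hNR
  have hu0K : u0 ∈ K := by
    constructor
    · intro m i; exact inv_nonneg.2 hsqrtN.le
    · intro m
      simp only [hu0]
      rw [Finset.sum_const, Finset.card_univ, Fintype.card_fin, nsmul_eq_mul]
      rw [inv_pow, Real.sq_sqrt hNR.le]
      exact mul_inv_cancel₀ (ne_of_gt hNR)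
  have hPer0 : 0 < PerC u0 := by
    refine Finset.sum_pos (fun σ _ => Finset.prod_pos fun j _ => inv_pos.2 hsqrtN) ?_
    exact Finset.univ_nonempty
  -- first stage maximizer
  obtain ⟨A₀, hA₀K, hA₀max⟩ := isCompact_K.exists_isMaxOn ⟨u0, hu0K⟩
    continuous_perC.continuousOn
  have hA₀max' : ∀ b ∈ K, PerC b ≤ PerC A₀ := fun b hb => hA₀max hb
  -- second stage maximizer
  set Amax : Set (Fin N → Fin N → ℝ) := K ∩ {b | PerC b = PerC A₀} with hAmax
  have hAmaxcpt : IsCompact Amax :=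
    isCompact_K.inter_right (isClosed_eq continuous_perC continuous_const)
  obtain ⟨A, hAarg, hAGmax⟩ := hAmaxcpt.exists_isMaxOn ⟨A₀, hA₀K, rfl⟩
    continuous_Gf.continuousOn
  have hAK : A ∈ K := hAarg.1
  have hAM : PerC A = PerC A₀ := hAarg.2
  have hmaxA : ∀ b : Fin N → Fin N → ℝ, (∀ m i, 0 ≤ b m i) →
      (∀ m, ∑ i, b m i ^ 2 = 1) → PerC b ≤ PerC A := by
    intro b h1 h2
    rw [hAM]
    exact hA₀max' b ⟨h1, h2⟩
  have hMpos : 0 < PerC A := lt_of_lt_of_le hPer0 (hmaxA u0 hu0K.1 hu0K.2)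
  -- all columns of A are equal
  have hcols : ∀ j k, A j = A k := by
    intro j k
    rcases eq_or_ne j k with rfl | hjk
    · rfl
    by_contra hne
    have e1 := key_col A hAK.1 hAK.2 hmaxA hMpos hjk
    have e2 := key_col A hAK.1 hAK.2 hmaxA hMpos hjk.symm
    set M := PerC A with hM
    set ρ := dotp (A j) (A k) with hρ
    have hρ0 : 0 ≤ ρ := dotp_nonneg (hAK.1 j) (hAK.1 k)
    have hρle : ρ ≤ 1 := by
      have hcs := Finset.sum_mul_sq_le_sq_mul_sq univ (A j) (A k)
      rw [hAK.2 j, hAK.2 k, one_mul] at hcs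
      have hsq : ρ ^ 2 ≤ 1 := hcs
      nlinarith
    have hρ1 : ρ < 1 := by
      rcases lt_or_eq_of_le hρle with h | h
      · exact h
      exfalso
      apply hne
      funext i
      have hzero : ∑ i, (A j i - A k i) ^ 2 = 0 := by
        have expand : ∀ i, (A j i - A k i) ^ 2
            = A j i ^ 2 + A k i ^ 2 - 2 * (A j i * A k i) := fun i => by ring
        rw [Finset.sum_congr rfl fun i _ => expand i, Finset.sum_sub_distrib,
          Finset.sum_add_distrib, ← Finset.mul_sum, hAK.2 j, hAK.2 k]
        have hrr : (∑ i, A j i * A k i) = ρ := hρ.symm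
        rw [hrr]
        linarith
      have h0 := (Finset.sum_eq_zero_iff_of_nonneg (fun i _ => sq_nonneg _)).1 hzero i
        (Finset.mem_univ i)
      have hz := pow_eq_zero_iff (two_ne_zero) |>.1 h0
      linarith
    have hdkj : dotp (A k) (A j) = ρ := by rw [dotp_comm]
    have TJK : TT A j k (A j) (A k) = M := (perC_eq_TT hjk).symm
    have TKJ : TT A j k (A k) (A j) = M := by
      rw [TT_swap A hjk]; exact TJK
    have TJJ : TT A j k (A j) (A j) = M * ρ := by
      rw [TT_slots A (A j) (A j), e2 (A j)]
    have TKK : TT A j k (A k) (A k) = M * ρ := by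
      rw [e1 (A k), hdkj]
    set s : Fin N → ℝ := fun i => A j i + A k i with hs
    have hss : (∑ i, s i * s i) = 2 + 2 * ρ := by
      have expand : ∀ i, s i * s i
          = A j i * A j i + (A j i * A k i + (A k i * A j i + A k i * A k i)) := by
        intro i; simp only [hs]; ring
      rw [Finset.sum_congr rfl fun i _ => expand i, Finset.sum_add_distrib,
        Finset.sum_add_distrib, Finset.sum_add_distrib]
      have h1 : (∑ i, A j i * A j i) = 1 := by
        have : dotp (A j) (A j) = 1 := by rw [dotp_self]; exact hAK.2 j
        exact this
      have h2 : (∑ i, A k i * A k i) = 1 := by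
        have : dotp (A k) (A k) = 1 := by rw [dotp_self]; exact hAK.2 k
        exact this
      have h3 : (∑ i, A j i * A k i) = ρ := hρ.symm
      have h4 : (∑ i, A k i * A j i) = ρ := hdkj
      rw [h1, h2, h3, h4]
      ring
    have hsspos : (0:ℝ) < 2 + 2 * ρ := by linarith
    have TSS : TT A j k s s = 2 * M * (1 + ρ) := by
      have expand : ∀ σ : Equiv.Perm (Fin N),
          s (σ j) * (s (σ k) * ∏ m ∈ (univ.erase j).erase k, A m (σ m))
          = A j (σ j) * (A j (σ k) * ∏ m ∈ (univ.erase j).erase k, A m (σ m))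
            + (A j (σ j) * (A k (σ k) * ∏ m ∈ (univ.erase j).erase k, A m (σ m))
            + (A k (σ j) * (A j (σ k) * ∏ m ∈ (univ.erase j).erase k, A m (σ m))
            + A k (σ j) * (A k (σ k) * ∏ m ∈ (univ.erase j).erase k, A m (σ m)))) := by
        intro σ; simp only [hs]; ring
      unfold TT
      rw [Finset.sum_congr rfl fun σ _ => expand σ, Finset.sum_add_distrib,
        Finset.sum_add_distrib, Finset.sum_add_distrib]
      have t1 : (∑ σ : Equiv.Perm (Fin N),
          A j (σ j) * (A j (σ k) * ∏ m ∈ (univ.erase j).erase k, A m (σ m))) = M * ρ := TJJ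
      have t2 : (∑ σ : Equiv.Perm (Fin N),
          A j (σ j) * (A k (σ k) * ∏ m ∈ (univ.erase j).erase k, A m (σ m))) = M := TJK
      have t3 : (∑ σ : Equiv.Perm (Fin N),
          A k (σ j) * (A j (σ k) * ∏ m ∈ (univ.erase j).erase k, A m (σ m))) = M := TKJ
      have t4 : (∑ σ : Equiv.Perm (Fin N),
          A k (σ j) * (A k (σ k) * ∏ m ∈ (univ.erase j).erase k, A m (σ m))) = M * ρ := TKK
      rw [t1, t2, t3, t4]
      ring
    set ns := Real.sqrt (2 + 2 * ρ) with hns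
    have hnspos : 0 < ns := Real.sqrt_pos.2 hsspos
    have hnsmul : ns * ns = 2 + 2 * ρ := Real.mul_self_sqrt hsspos.le
    have hnslt : ns < 2 := by
      rw [hns]
      refine (Real.sqrt_lt' (by norm_num)).2 (by nlinarith)
    set v : Fin N → ℝ := fun i => s i / ns with hv
    have hv0 : ∀ i, 0 ≤ v i := by
      intro i
      refine div_nonneg ?_ hnspos.le
      simp only [hs]
      exact add_nonneg (hAK.1 j i) (hAK.1 k i)
    have hv1 : ∑ i, v i ^ 2 = 1 := by
      simp only [hv, div_pow]
      rw [← Finset.sum_div]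
      have hs2 : (∑ i, s i ^ 2) = 2 + 2 * ρ := by
        simp only [pow_two]
        exact hss
      rw [hs2, sq, hnsmul]
      exact div_self (ne_of_gt hsspos)
    have hTvv : TT A j k v v = M := by
      have hdiv : TT A j k v v = TT A j k s s / (ns * ns) := by
        unfold TT
        rw [Finset.sum_div]
        refine Finset.sum_congr rfl fun σ _ => ?_
        simp only [hv]
        field_simp
      rw [hdiv, TSS, hnsmul]
      field_simp
    have hA'K : (∀ m i, 0 ≤ upd2 A j k v v m i) ∧
        (∀ m, ∑ i, upd2 A j k v v m i ^ 2 = 1) := by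
      constructor
      · intro m i
        unfold upd2
        split_ifs
        · exact hv0 i
        · exact hv0 i
        · exact hAK.1 m i
      · intro m
        unfold upd2
        split_ifs
        · exact hv1
        · exact hv1
        · exact hAK.2 m
    have hA'M : PerC (upd2 A j k v v) = PerC A₀ := by
      rw [perC_upd2 hjk, hTvv]
      exact hAM
    have hGle : Gf (upd2 A j k v v) ≤ Gf A :=
      hAGmax (⟨⟨hA'K.1, hA'K.2⟩, hA'M⟩ : upd2 A j k v v ∈ Amax)
    set R : Fin N → ℝ := fun i => ∑ m, A m i with hR
    set cc : ℝ := 2 / ns - 1 with hcc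
    have hccpos : 0 < cc := by
      rw [hcc]
      have h2 : 1 < 2 / ns := (one_lt_div hnspos).2 hnslt
      linarith
    have hrow : ∀ i, (∑ m, upd2 A j k v v m i) = R i + cc * s i := by
      intro i
      have split1 : ∑ m, upd2 A j k v v m i
          = upd2 A j k v v j i + (upd2 A j k v v k i
            + ∑ m ∈ (univ.erase j).erase k, upd2 A j k v v m i) := by
        rw [Finset.add_sum_erase (univ.erase j) (fun m => upd2 A j k v v m i)
            (Finset.mem_erase.2 ⟨Ne.symm hjk, Finset.mem_univ k⟩),
          Finset.add_sum_erase univ (fun m => upd2 A j k v v m i) (Finset.mem_univ j)]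
      have split2 : R i = A j i + (A k i + ∑ m ∈ (univ.erase j).erase k, A m i) := by
        show (∑ m, A m i) = _
        rw [Finset.add_sum_erase (univ.erase j) (fun m => A m i)
            (Finset.mem_erase.2 ⟨Ne.symm hjk, Finset.mem_univ k⟩),
          Finset.add_sum_erase univ (fun m => A m i) (Finset.mem_univ j)]
      have hEeq : ∑ m ∈ (univ.erase j).erase k, upd2 A j k v v m i
          = ∑ m ∈ (univ.erase j).erase k, A m i :=
        Finset.sum_congr rfl fun m hm => by
          obtain ⟨hm1, hm2⟩ := mem_EE hm
          simp [upd2, hm1, hm2]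
      have hj' : upd2 A j k v v j i = v i := by simp [upd2]
      have hk' : upd2 A j k v v k i = v i := by simp [upd2, Ne.symm hjk]
      rw [split1, split2, hEeq, hj', hk']
      have hvi : v i = s i / ns := rfl
      have hsi : s i = A j i + A k i := rfl
      rw [hvi, hcc]
      field_simp
      ring
    have hG' : Gf (upd2 A j k v v)
        = Gf A + (2 * cc) * (∑ i, R i * s i) + cc ^ 2 * (2 + 2 * ρ) := by
      unfold Gf
      rw [Finset.sum_congr rfl fun i _ => by rw [hrow i]]
      have expand : ∀ i, (R i + cc * s i) ^ 2
          = (∑ m, A m i) ^ 2 + (2 * cc) * (R i * s i) + cc ^ 2 * (s i * s i) := by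
        intro i
        have : R i = ∑ m, A m i := rfl
        rw [← this]
        ring
      rw [Finset.sum_congr rfl fun i _ => expand i, Finset.sum_add_distrib,
        Finset.sum_add_distrib, ← Finset.mul_sum, ← Finset.mul_sum, hss]
    have hRs : 0 ≤ ∑ i, R i * s i := by
      refine Finset.sum_nonneg fun i _ => mul_nonneg ?_ ?_
      · exact Finset.sum_nonneg fun m _ => hAK.1 m i
      · exact add_nonneg (hAK.1 j i) (hAK.1 k i)
    nlinarith [hGle, hG', hccpos, hRs, hsspos]
  -- conclude : all columns equal
  have hPerA : PerC A ≤ (N.factorial : ℝ) / (N : ℝ) ^ ((N : ℝ) / 2) := by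
    set u : Fin N → ℝ := A ⟨0, hN⟩ with hu
    have hcA : ∀ m, A m = u := fun m => hcols m ⟨0, hN⟩
    have hPerAu : PerC A = (N.factorial : ℝ) * ∏ i, u i := by
      unfold PerC
      have hterm : ∀ σ : Equiv.Perm (Fin N), (∏ m, A m (σ m)) = ∏ i, u i := by
        intro σ
        calc ∏ m, A m (σ m) = ∏ m, u (σ m) :=
              Finset.prod_congr rfl fun m _ => by rw [hcA m]
          _ = ∏ i, u i := Equiv.prod_comp σ u
      rw [Finset.sum_congr rfl fun σ _ => hterm σ, Finset.sum_const, Finset.card_univ,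
        Fintype.card_perm, Fintype.card_fin, nsmul_eq_mul]
    have hu0' : ∀ i, 0 ≤ u i := fun i => hAK.1 _ i
    have hu1' : ∑ i, u i ^ 2 = 1 := hAK.2 _
    have hprod : ∏ i, u i ≤ ((N : ℝ) ^ ((N : ℝ) / 2))⁻¹ := by
      have hgm := Real.geom_mean_le_arith_mean_weighted univ (fun _ => (N:ℝ)⁻¹)
        (fun i => u i ^ 2) (fun i _ => by positivity)
        (by
          rw [Finset.sum_const, Finset.card_univ, Fintype.card_fin, nsmul_eq_mul]
          exact mul_inv_cancel₀ (ne_of_gt hNR))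
        (fun i _ => sq_nonneg _)
      rw [Real.finset_prod_rpow univ _ (fun i _ => sq_nonneg _) _] at hgm
      have hsum : (∑ i, (N:ℝ)⁻¹ * u i ^ 2) = (N:ℝ)⁻¹ := by
        rw [← Finset.mul_sum, hu1', mul_one]
      rw [hsum] at hgm
      have hP0 : (0:ℝ) ≤ ∏ i, u i ^ 2 := Finset.prod_nonneg fun i _ => sq_nonneg _
      have hkey : (∏ i, u i ^ 2) ≤ ((N:ℝ)⁻¹) ^ (N : ℕ) := by
        have h1 : ((∏ i, u i ^ 2) ^ ((N:ℝ)⁻¹)) ^ (N : ℕ) ≤ ((N:ℝ)⁻¹) ^ (N : ℕ) :=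
          pow_le_pow_left₀ (Real.rpow_nonneg hP0 _) hgm N
        rwa [← Real.rpow_natCast ((∏ i, u i ^ 2) ^ ((N:ℝ)⁻¹)) N,
          ← Real.rpow_mul hP0, inv_mul_cancel₀ (ne_of_gt hNR), Real.rpow_one] at h1
      have hsq : (∏ i, u i) ^ 2 = ∏ i, u i ^ 2 := by rw [← Finset.prod_pow]
      have hx2 : (((N:ℝ) ^ ((N:ℝ) / 2))⁻¹) ^ 2 = ((N:ℝ)⁻¹) ^ (N : ℕ) := by
        rw [inv_pow, inv_pow]
        congr 1
        rw [← Real.rpow_natCast ((N:ℝ) ^ ((N:ℝ) / 2)) 2, ← Real.rpow_mul hNR.le]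
        rw [show (N:ℝ) / 2 * ((2:ℕ):ℝ) = (N:ℝ) by push_cast; ring]
        exact Real.rpow_natCast _ N
      have hprodnn : (0:ℝ) ≤ ∏ i, u i := Finset.prod_nonneg fun i _ => hu0' i
      have hxnn : (0:ℝ) ≤ ((N : ℝ) ^ ((N : ℝ) / 2))⁻¹ :=
        inv_nonneg.2 (Real.rpow_nonneg hNR.le _)
      nlinarith [hkey, hsq, hx2, hprodnn, hxnn]
    rw [hPerAu, div_eq_mul_inv]
    exact mul_le_mul_of_nonneg_left hprod (Nat.cast_nonneg _)
  exact (hmaxA c hc0 hc1).trans hPerA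


lemma perC_le_C2 (hN : 0 < N) (c : Fin N → Fin N → ℝ) (hc : ∀ j i, 0 ≤ c j i) :
    PerC c ≤ ((N.factorial : ℝ) / (N : ℝ) ^ ((N : ℝ) / 2))
      * ∏ j, Real.sqrt (∑ i, c j i ^ 2) := by
  have hC2 : (0:ℝ) ≤ (N.factorial : ℝ) / (N : ℝ) ^ ((N : ℝ) / 2) :=
    div_nonneg (Nat.cast_nonneg _) (Real.rpow_nonneg (Nat.cast_nonneg _) _)
  by_cases hz : ∀ j, 0 < ∑ i, c j i ^ 2
  · have hrpos : ∀ j, 0 < Real.sqrt (∑ i, c j i ^ 2) :=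
      fun j => Real.sqrt_pos.2 (hz j)
    set u : Fin N → Fin N → ℝ := fun j i => c j i / Real.sqrt (∑ i, c j i ^ 2) with hu
    have hc_eq : ∀ j i, c j i = Real.sqrt (∑ i, c j i ^ 2) * u j i := by
      intro j i
      simp only [hu]
      rw [mul_comm]
      exact (div_mul_cancel₀ _ (ne_of_gt (hrpos j))).symm
    have hPer : PerC c = (∏ j, Real.sqrt (∑ i, c j i ^ 2)) * PerC u := by
      unfold PerC
      rw [Finset.mul_sum]
      refine Finset.sum_congr rfl fun σ _ => ?_
      rw [Finset.prod_congr rfl fun j _ => hc_eq j (σ j), Finset.prod_mul_distrib]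
    have hu0 : ∀ j i, 0 ≤ u j i := fun j i => div_nonneg (hc j i) (hrpos j).le
    have hu1 : ∀ j, ∑ i, u j i ^ 2 = 1 := by
      intro j
      simp only [hu, div_pow]
      rw [← Finset.sum_div, Real.sq_sqrt (Finset.sum_nonneg fun i _ => sq_nonneg _)]
      exact div_self (ne_of_gt (hz j))
    rw [hPer]
    have hbound := perC_le_on_K hN u hu0 hu1
    have hrprod : (0:ℝ) ≤ ∏ j, Real.sqrt (∑ i, c j i ^ 2) :=
      Finset.prod_nonneg fun j _ => (hrpos j).le
    calc (∏ j, Real.sqrt (∑ i, c j i ^ 2)) * PerC u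
        ≤ (∏ j, Real.sqrt (∑ i, c j i ^ 2))
          * ((N.factorial : ℝ) / (N : ℝ) ^ ((N : ℝ) / 2)) :=
          mul_le_mul_of_nonneg_left hbound hrprod
      _ = _ := mul_comm _ _
  · push_neg at hz
    obtain ⟨j0, hj0⟩ := hz
    have hsum0 : ∑ i, c j0 i ^ 2 = 0 :=
      le_antisymm hj0 (Finset.sum_nonneg fun i _ => sq_nonneg _)
    have hcj0 : ∀ i, c j0 i = 0 := by
      intro i
      have h0 := (Finset.sum_eq_zero_iff_of_nonneg (fun i _ => sq_nonneg _)).1 hsum0 i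
        (Finset.mem_univ i)
      exact pow_eq_zero_iff (two_ne_zero) |>.1 h0
    have hPer0 : PerC c = 0 :=
      Finset.sum_eq_zero fun σ _ => Finset.prod_eq_zero (Finset.mem_univ j0) (hcj0 _)
    rw [hPer0]
    exact mul_nonneg hC2 (Finset.prod_nonneg fun j _ => Real.sqrt_nonneg _)

lemma perC_le_l1 (c : Fin N → Fin N → ℝ) (hc : ∀ j i, 0 ≤ c j i) :
    PerC c ≤ ∏ j, ∑ i, c j i := by
  classical
  have h1 : PerC c = ∑ ρ ∈ Finset.univ.image
      (fun σ : Equiv.Perm (Fin N) => (σ : Fin N → Fin N)), ∏ j, c j (ρ j) := by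
    rw [Finset.sum_image (fun σ _ τ _ h => Equiv.coe_fn_injective h)]
    rfl
  have h2 : ∑ ρ ∈ Finset.univ.image
      (fun σ : Equiv.Perm (Fin N) => (σ : Fin N → Fin N)), ∏ j, c j (ρ j)
      ≤ ∑ ρ : Fin N → Fin N, ∏ j, c j (ρ j) :=
    Finset.sum_le_sum_of_subset_of_nonneg (Finset.subset_univ _)
      (fun ρ _ _ => Finset.prod_nonneg fun j _ => hc j (ρ j))
  have h3 : (∑ ρ : Fin N → Fin N, ∏ j, c j (ρ j)) = ∏ j, ∑ i, c j i := by
    rw [Finset.prod_univ_sum]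
    rw [Fintype.piFinset_univ]
  rw [h1, ← h3]
  exact h2

lemma holder_two {ι : Type*} [Fintype ι] (u w : ι → ℝ) (hu : ∀ i, 0 ≤ u i)
    (hw : ∀ i, 0 ≤ w i) {θ : ℝ} (hθ0 : 0 ≤ θ) (hθ1 : θ ≤ 1) :
    ∑ i, u i ^ (1 - θ) * w i ^ θ ≤ (∑ i, u i) ^ (1 - θ) * (∑ i, w i) ^ θ := by
  rcases eq_or_lt_of_le hθ0 with h0 | h0
  · simp [← h0]
  rcases eq_or_lt_of_le hθ1 with h1 | h1
  · simp [h1]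
  have hU : (0:ℝ) ≤ ∑ i, u i := Finset.sum_nonneg fun i _ => hu i
  have hW : (0:ℝ) ≤ ∑ i, w i := Finset.sum_nonneg fun i _ => hw i
  rcases eq_or_lt_of_le hU with hU0 | hUp
  · have hz : ∀ i ∈ Finset.univ, u i = 0 :=
      (Finset.sum_eq_zero_iff_of_nonneg fun i _ => hu i).1 hU0.symm
    have hL : ∑ i, u i ^ (1 - θ) * w i ^ θ = 0 :=
      Finset.sum_eq_zero fun i hi => by
        rw [hz i hi, Real.zero_rpow (by linarith), zero_mul]
    rw [hL, ← hU0, Real.zero_rpow (by linarith : (1:ℝ) - θ ≠ 0), zero_mul]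
  rcases eq_or_lt_of_le hW with hW0 | hWp
  · have hz : ∀ i ∈ Finset.univ, w i = 0 :=
      (Finset.sum_eq_zero_iff_of_nonneg fun i _ => hw i).1 hW0.symm
    have hL : ∑ i, u i ^ (1 - θ) * w i ^ θ = 0 :=
      Finset.sum_eq_zero fun i hi => by
        rw [hz i hi, Real.zero_rpow (ne_of_gt h0), mul_zero]
    rw [hL, ← hW0, Real.zero_rpow (ne_of_gt h0), mul_zero]
  -- both sums positive
  have hPU : (0:ℝ) < (∑ i, u i) ^ (1 - θ) := Real.rpow_pos_of_pos hUp _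
  have hPW : (0:ℝ) < (∑ i, w i) ^ θ := Real.rpow_pos_of_pos hWp _
  have heach : ∀ i, (u i / ∑ i, u i) ^ (1 - θ) * (w i / ∑ i, w i) ^ θ
      ≤ (1 - θ) * (u i / ∑ i, u i) + θ * (w i / ∑ i, w i) := by
    intro i
    have hgm := Real.geom_mean_le_arith_mean_weighted Finset.univ
      (![1 - θ, θ]) (![u i / ∑ i, u i, w i / ∑ i, w i])
      (fun t _ => by fin_cases t <;> simp <;> linarith)
      (by simp)
      (fun t _ => by
        fin_cases t <;> simp <;>
          [exact div_nonneg (hu i) hU; exact div_nonneg (hw i) hW])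
    simpa [Fin.prod_univ_two, Fin.sum_univ_two] using hgm
  have htrans : ∀ i, u i ^ (1 - θ) * w i ^ θ
      = ((∑ i, u i) ^ (1 - θ) * (∑ i, w i) ^ θ)
        * ((u i / ∑ i, u i) ^ (1 - θ) * (w i / ∑ i, w i) ^ θ) := by
    intro i
    rw [Real.div_rpow (hu i) hU, Real.div_rpow (hw i) hW]
    field_simp
  calc ∑ i, u i ^ (1 - θ) * w i ^ θ
      = ((∑ i, u i) ^ (1 - θ) * (∑ i, w i) ^ θ)
        * ∑ i, (u i / ∑ i, u i) ^ (1 - θ) * (w i / ∑ i, w i) ^ θ := by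
        rw [Finset.mul_sum]
        exact Finset.sum_congr rfl fun i _ => htrans i
    _ ≤ ((∑ i, u i) ^ (1 - θ) * (∑ i, w i) ^ θ)
        * ∑ i, ((1 - θ) * (u i / ∑ i, u i) + θ * (w i / ∑ i, w i)) := by
        refine mul_le_mul_of_nonneg_left (Finset.sum_le_sum fun i _ => heach i) ?_
        exact mul_nonneg hPU.le hPW.le
    _ = ((∑ i, u i) ^ (1 - θ) * (∑ i, w i) ^ θ) * 1 := by
        congr 1
        rw [Finset.sum_add_distrib, ← Finset.mul_sum, ← Finset.mul_sum,
          ← Finset.sum_div, ← Finset.sum_div, div_self (ne_of_gt hUp),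
          div_self (ne_of_gt hWp)]
        ring
    _ = _ := mul_one _


lemma rpow_combine {p θ x : ℝ} (hx : 0 ≤ x) (hp : 0 < p) (hθ0 : 0 ≤ θ) (hθ1 : θ ≤ 1)
    (hexp : p * (1 - θ) + p / 2 * θ = 1) :
    (x ^ p) ^ (1 - θ) * (x ^ (p / 2)) ^ θ = x := by
  rw [← Real.rpow_mul hx, ← Real.rpow_mul hx,
    ← Real.rpow_add_of_nonneg hx (mul_nonneg hp.le (by linarith))
      (mul_nonneg (by positivity) hθ0), hexp, Real.rpow_one]

end CpProof

theorem Cp_upper_bound {N : ℕ} (hN : 0 < N) (p : ℝ) (hp1 : 1 ≤ p) (hp2 : p ≤ 2) :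
    Cp N p ≤ ((N.factorial : ℝ) / (N : ℝ) ^ ((N : ℝ) / 2)) ^ (2 - 2 / p) := by
  classical
  open CpProof in
  have hp0 : (0:ℝ) < p := lt_of_lt_of_le one_pos hp1
  have hC2nn : (0:ℝ) ≤ (N.factorial : ℝ) / (N : ℝ) ^ ((N : ℝ) / 2) :=
    div_nonneg (Nat.cast_nonneg _) (Real.rpow_nonneg (Nat.cast_nonneg _) _)
  have hθ0 : (0:ℝ) ≤ 2 - 2 / p := by
    have h2p : 2 / p ≤ 2 := by rw [div_le_iff₀ hp0]; nlinarith
    linarith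
  have hθ1 : 2 - 2 / p ≤ 1 := by
    have h1p : 1 ≤ 2 / p := by rw [le_div_iff₀ hp0]; linarith
    linarith
  have hexp : p * (1 - (2 - 2 / p)) + p / 2 * (2 - 2 / p) = 1 := by
    field_simp
    ring
  apply Real.sSup_le _ (Real.rpow_nonneg hC2nn _)
  rintro r ⟨f, hf, rfl⟩
  set g : Fin N → Fin N → ℝ := fun j i => ‖f j i‖ with hg
  have hg0 : ∀ j i, 0 ≤ g j i := fun j i => norm_nonneg _
  have hSpos : ∀ j, 0 < ∑ i, g j i ^ p := by
    intro j
    obtain ⟨i0, hi0⟩ : ∃ i, f j i ≠ 0 := by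
      by_contra h
      push_neg at h
      exact hf j (funext h)
    refine Finset.sum_pos' (fun i _ => Real.rpow_nonneg (hg0 j i) _)
      ⟨i0, Finset.mem_univ i0, ?_⟩
    exact Real.rpow_pos_of_pos (by simp only [hg]; exact norm_pos_iff.2 hi0) _
  have hLdef : ∀ j, lpnorm p (f j) = (∑ i, g j i ^ p) ^ (1 / p) := fun j => rfl
  have hLpos : ∀ j, 0 < lpnorm p (f j) := fun j => by
    rw [hLdef j]; exact Real.rpow_pos_of_pos (hSpos j) _
  have hLp : ∀ j, lpnorm p (f j) ^ p = ∑ i, g j i ^ p := by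
    intro j
    rw [hLdef j, ← Real.rpow_mul (hSpos j).le, one_div,
      inv_mul_cancel₀ (ne_of_gt hp0), Real.rpow_one]
  have step1 : ‖perm (fun i j => f j i)‖ ≤ PerC g := by
    unfold perm PerC
    refine le_trans (norm_sum_le _ _)
      (le_of_eq (Finset.sum_congr rfl fun σ _ => ?_))
    rw [norm_prod]
  have hperC_nn1 : 0 ≤ PerC (fun j i => g j i ^ p) :=
    perC_nonneg fun j i => Real.rpow_nonneg (hg0 j i) _
  have hperC_nn2 : 0 ≤ PerC (fun j i => g j i ^ (p / 2)) :=
    perC_nonneg fun j i => Real.rpow_nonneg (hg0 j i) _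
  have hsplit : PerC g ≤ PerC (fun j i => g j i ^ p) ^ (1 - (2 - 2 / p))
      * PerC (fun j i => g j i ^ (p / 2)) ^ (2 - 2 / p) := by
    have hpt : ∀ σ : Equiv.Perm (Fin N), (∏ j, g j (σ j))
        = (∏ j, g j (σ j) ^ p) ^ (1 - (2 - 2 / p))
          * (∏ j, g j (σ j) ^ (p / 2)) ^ (2 - 2 / p) := by
      intro σ
      rw [Real.finset_prod_rpow _ _ (fun j _ => hg0 _ _) p,
        Real.finset_prod_rpow _ _ (fun j _ => hg0 _ _) (p / 2)]
      exact (rpow_combine (Finset.prod_nonneg fun j _ => hg0 _ _) hp0 hθ0 hθ1 hexp).symm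
    calc PerC g
        = ∑ σ : Equiv.Perm (Fin N), (∏ j, g j (σ j) ^ p) ^ (1 - (2 - 2 / p))
          * (∏ j, g j (σ j) ^ (p / 2)) ^ (2 - 2 / p) :=
          Finset.sum_congr rfl fun σ _ => hpt σ
      _ ≤ (∑ σ : Equiv.Perm (Fin N), ∏ j, g j (σ j) ^ p) ^ (1 - (2 - 2 / p))
          * (∑ σ : Equiv.Perm (Fin N), ∏ j, g j (σ j) ^ (p / 2)) ^ (2 - 2 / p) :=
          holder_two _ _
            (fun σ => Finset.prod_nonneg fun j _ => Real.rpow_nonneg (hg0 _ _) _)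
            (fun σ => Finset.prod_nonneg fun j _ => Real.rpow_nonneg (hg0 _ _) _) hθ0 hθ1
      _ = _ := rfl
  have hS1 : PerC (fun j i => g j i ^ p) ≤ ∏ j, lpnorm p (f j) ^ p := by
    refine le_trans (perC_le_l1 _ fun j i => Real.rpow_nonneg (hg0 j i) _) ?_
    exact le_of_eq (Finset.prod_congr rfl fun j _ => (hLp j).symm)
  have hS2 : PerC (fun j i => g j i ^ (p / 2))
      ≤ ((N.factorial : ℝ) / (N : ℝ) ^ ((N : ℝ) / 2))
        * ∏ j, lpnorm p (f j) ^ (p / 2) := by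
    refine le_trans (perC_le_C2 hN _ fun j i => Real.rpow_nonneg (hg0 j i) _)
      (le_of_eq ?_)
    congr 1
    refine Finset.prod_congr rfl fun j _ => ?_
    have h1 : ∀ i, (g j i ^ (p / 2)) ^ 2 = g j i ^ p := by
      intro i
      rw [← Real.rpow_natCast (g j i ^ (p / 2)) 2, ← Real.rpow_mul (hg0 j i)]
      norm_num
    rw [Finset.sum_congr rfl fun i _ => h1 i, Real.sqrt_eq_rpow, hLdef j,
      ← Real.rpow_mul (Finset.sum_nonneg fun i _ => Real.rpow_nonneg (hg0 j i) _)]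
    congr 1
    field_simp
  have hProdL : 0 < ∏ j, lpnorm p (f j) := Finset.prod_pos fun j _ => hLpos j
  have hProdLnn : (0:ℝ) ≤ ∏ j, lpnorm p (f j) := hProdL.le
  have main : ‖perm fun i j => f j i‖
      ≤ ((N.factorial : ℝ) / (N : ℝ) ^ ((N : ℝ) / 2)) ^ (2 - 2 / p)
        * ∏ j, lpnorm p (f j) := by
    have hb1 : PerC (fun j i => g j i ^ p) ^ (1 - (2 - 2 / p))
        ≤ (∏ j, lpnorm p (f j) ^ p) ^ (1 - (2 - 2 / p)) :=
      Real.rpow_le_rpow hperC_nn1 hS1 (by linarith)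
    have hb2 : PerC (fun j i => g j i ^ (p / 2)) ^ (2 - 2 / p)
        ≤ (((N.factorial : ℝ) / (N : ℝ) ^ ((N : ℝ) / 2))
          * ∏ j, lpnorm p (f j) ^ (p / 2)) ^ (2 - 2 / p) :=
      Real.rpow_le_rpow hperC_nn2 hS2 hθ0
    have hfinal : (∏ j, lpnorm p (f j) ^ p) ^ (1 - (2 - 2 / p))
        * (((N.factorial : ℝ) / (N : ℝ) ^ ((N : ℝ) / 2))
          * ∏ j, lpnorm p (f j) ^ (p / 2)) ^ (2 - 2 / p)
        = ((N.factorial : ℝ) / (N : ℝ) ^ ((N : ℝ) / 2)) ^ (2 - 2 / p)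
          * ∏ j, lpnorm p (f j) := by
      rw [Real.mul_rpow hC2nn
          (Finset.prod_nonneg fun j _ => Real.rpow_nonneg (hLpos j).le _),
        Real.finset_prod_rpow _ _ (fun j _ => (hLpos j).le) p,
        Real.finset_prod_rpow _ _ (fun j _ => (hLpos j).le) (p / 2)]
      have hc : ((∏ j, lpnorm p (f j)) ^ p) ^ (1 - (2 - 2 / p))
          * ((∏ j, lpnorm p (f j)) ^ (p / 2)) ^ (2 - 2 / p)
          = ∏ j, lpnorm p (f j) :=
        rpow_combine hProdLnn hp0 hθ0 hθ1 hexp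
      calc ((∏ j, lpnorm p (f j)) ^ p) ^ (1 - (2 - 2 / p))
          * (((N.factorial : ℝ) / (N : ℝ) ^ ((N : ℝ) / 2)) ^ (2 - 2 / p)
            * ((∏ j, lpnorm p (f j)) ^ (p / 2)) ^ (2 - 2 / p))
          = ((N.factorial : ℝ) / (N : ℝ) ^ ((N : ℝ) / 2)) ^ (2 - 2 / p)
            * (((∏ j, lpnorm p (f j)) ^ p) ^ (1 - (2 - 2 / p))
              * ((∏ j, lpnorm p (f j)) ^ (p / 2)) ^ (2 - 2 / p)) := by ring
        _ = _ := by rw [hc]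
    calc ‖perm fun i j => f j i‖ ≤ PerC g := step1
      _ ≤ PerC (fun j i => g j i ^ p) ^ (1 - (2 - 2 / p))
          * PerC (fun j i => g j i ^ (p / 2)) ^ (2 - 2 / p) := hsplit
      _ ≤ (∏ j, lpnorm p (f j) ^ p) ^ (1 - (2 - 2 / p))
          * (((N.factorial : ℝ) / (N : ℝ) ^ ((N : ℝ) / 2))
            * ∏ j, lpnorm p (f j) ^ (p / 2)) ^ (2 - 2 / p) := by
          refine mul_le_mul hb1 hb2 (Real.rpow_nonneg hperC_nn2 _)
            (Real.rpow_nonneg (Finset.prod_nonneg fun j _ =>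
              Real.rpow_nonneg (hLpos j).le _) _)
      _ = _ := hfinal
  rw [div_le_iff₀ hProdL]
  exact main
end
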